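/- arXiv:2302.02686 — 7 statements merged into one kernel-verified Lean document; each statement's English description precedes it below -/
import Mathlib

section
/- Let G(E) be a well-formed TFG for (N1,m1) ▷_E (N2,m2), with both nets safe, and C its node concurrency relation. If v and w are nodes with v ∉ succ(w), w ∉ succ(v), and v C w, then v' C w' for every pair (v',w') ∈ succ(v) × succ(w). -/
open Finset

/-- A Petri net over a type of places `P`. -/
structure PetriNet (P : Type) where
  Trans : Type
  pre : Trans → P → ℕ
  post : Trans → P → ℕ

/-- Firing relation between markings. -/
def PetriNet.fire {P : Type} (N : PetriNet P) (m m' : P → ℕ) : Prop :=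
  ∃ t : N.Trans, (∀ p, N.pre t p ≤ m p) ∧ ∀ p, m' p = m p - N.pre t p + N.post t p

/-- Reachability of a marking from an initial one. -/
def PetriNet.reach {P : Type} (N : PetriNet P) (m0 m : P → ℕ) : Prop :=
  Relation.ReflTransGen N.fire m0 m

/-- A marked net is safe (1-bounded) when every reachable marking has at most one token per place. -/
def PetriNet.Safe {P : Type} (N : PetriNet P) (m0 : P → ℕ) : Prop :=
  ∀ m, N.reach m0 m → ∀ p, m p ≤ 1

/-- Two places are concurrent when some reachable marking marks both positively. -/
def PetriNet.ConcPlaces {P : Type} (N : PetriNet P) (m0 : P → ℕ) (p q : P) : Prop :=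
  ∃ m, N.reach m0 m ∧ 0 < m p ∧ 0 < m q

/-- A Token Flow Graph: redundancy arcs `R`, agglomeration arcs `A` (disjoint from `R`,
enforced in well-formedness), and constant nodes given by `kval`. -/
structure TFG (V : Type) [DecidableEq V] where
  R : Finset (V × V)
  A : Finset (V × V)
  kval : V → Option ℕ

variable {V : Type} [DecidableEq V]

def TFG.Edge (G : TFG V) (v w : V) : Prop := (v, w) ∈ G.R ∨ (v, w) ∈ G.A

/-- `G.Reach v w` means `v →* w`. -/
def TFG.Reach (G : TFG V) : V → V → Prop := Relation.ReflTransGen G.Edge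

/-- Successor set `succ(v)` (includes `v` itself). -/
def TFG.succs (G : TFG V) (v : V) : Set V := {w | G.Reach v w}

/-- A root has no incoming arc. -/
def TFG.IsRoot (G : TFG V) (v : V) : Prop := ∀ w, ¬ G.Edge w v

/-- A ∘-leaf has no outgoing agglomeration arc. -/
def TFG.IsCircLeaf (G : TFG V) (v : V) : Prop := ∀ w, (v, w) ∉ G.A

/-- The set `X` such that `v ∘→ X` (agglomeration children of `v`). -/
def TFG.aggChildren (G : TFG V) (v : V) : Finset V :=
  (G.A.filter (fun e => e.1 = v)).image Prod.snd

/-- The set `X` such that `X →• v` (redundancy parents of `v`). -/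
def TFG.redParents (G : TFG V) (v : V) : Finset V :=
  (G.R.filter (fun e => e.2 = v)).image Prod.fst

/-- A configuration is a partial valuation of the nodes; it must agree with constant nodes. -/
def TFG.IsConfig (G : TFG V) (c : V → Option ℕ) : Prop :=
  ∀ v n, G.kval v = some n → c v = some n

/-- A configuration is total when it is defined on every node. -/
def TotalConf (c : V → Option ℕ) : Prop := ∀ v, c v ≠ none

/-- Value of a configuration at a node (0 if undefined). -/
def cval (c : V → Option ℕ) (v : V) : ℕ := (c v).getD 0

/-- Well-definedness of a configuration: conditions (CBot) and (CEq). -/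
def TFG.WellDef (G : TFG V) (c : V → Option ℕ) : Prop :=
  (∀ v w, G.Edge v w → (c v = none ↔ c w = none)) ∧
  (∀ v n, c v = some n →
    ((G.aggChildren v).Nonempty → n = ∑ w ∈ G.aggChildren v, cval c w) ∧
    ((G.redParents v).Nonempty → n = ∑ w ∈ G.redParents v, cval c w))

/-- A system of reduction equations: `(v, X)` stands for the equation `v = ∑_{w ∈ X} w`. -/
abbrev EqSys (V : Type) := Finset (V × Finset V)

/-- A (non-negative integer) solution of the system `E`. -/
def Solves (E : EqSys V) (s : V → ℕ) : Prop :=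
  ∀ e ∈ E, s e.1 = ∑ w ∈ e.2, s w

/-- `E, ⟦c⟧` is consistent: some solution of `E` extends the partial valuation `c`. -/
def ConsistentWith (E : EqSys V) (c : V → Option ℕ) : Prop :=
  ∃ s : V → ℕ, Solves E s ∧ ∀ v n, c v = some n → s v = n

/-- Variables occurring in `E`. -/
def fvars (E : EqSys V) : Set V := {v | ∃ e ∈ E, v = e.1 ∨ v ∈ e.2}

/-- View a marking over the set of places `P` as a partial configuration over `V`. -/
def mconf (P : Set V) [DecidablePred (· ∈ P)] (m : ↥P → ℕ) : V → Option ℕ :=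
  fun v => if h : v ∈ P then some (m ⟨v, h⟩) else none

/-- Restriction of a configuration to a set of places, seen as a marking. -/
def restrict (c : V → Option ℕ) (P : Set V) : ↥P → ℕ := fun p => cval c ↑p

/-- Compatibility `c ≡ m` of a configuration with a marking on `P`. -/
def CompatM (c : V → Option ℕ) (P : Set V) (m : ↥P → ℕ) : Prop :=
  ∀ p : ↥P, c ↑p = some (m p)

/-- A solution of `E` agrees with a marking on `P`. -/
def AgreesOn (s : V → ℕ) (P : Set V) (m : ↥P → ℕ) : Prop := ∀ p : ↥P, s ↑p = m p

/-- `E`-equivalence `(N1,m1) ▷_E (N2,m2)`: conditions (A1), (A2), (A3). -/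
structure EEquiv (E : EqSys V) (P1 P2 : Set V)
    (N1 : PetriNet ↥P1) (m1 : ↥P1 → ℕ) (N2 : PetriNet ↥P2) (m2 : ↥P2 → ℕ) : Prop where
  A1l : ∀ m, N1.reach m1 m → ∃ s, Solves E s ∧ AgreesOn s P1 m
  A1r : ∀ m, N2.reach m2 m → ∃ s, Solves E s ∧ AgreesOn s P2 m
  A2 : ∃ s, Solves E s ∧ AgreesOn s P1 m1 ∧ AgreesOn s P2 m2
  A3 : ∀ m1' m2', (∃ s, Solves E s ∧ AgreesOn s P1 m1' ∧ AgreesOn s P2 m2') →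
      (N1.reach m1 m1' ↔ N2.reach m2 m2')

/-- Well-formedness of a TFG for an equivalence statement: conditions (T1)–(T6). -/
structure WellFormed (G : TFG V) (E : EqSys V) (P1 P2 : Set V) : Prop where
  T1 : {v | G.kval v = none} = P1 ∪ P2 ∪ fvars E
  T2 : ∀ v, G.kval v ≠ none → G.IsRoot v
  T3a : ∀ p p' q, (p, q) ∈ G.A → G.Edge p' q → p' = p
  T3b : ∀ p q, ¬((p, q) ∈ G.R ∧ (p, q) ∈ G.A)
  T4 : ∀ v X, ((X = G.aggChildren v ∨ X = G.redParents v) ∧ X.Nonempty) ↔ (v, X) ∈ E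
  T5 : ∀ v, ¬ Relation.TransGen G.Edge v v
  T6root : ∀ v, G.kval v = none → (G.IsRoot v ↔ v ∈ P2)
  T6leaf : ∀ v, G.kval v = none → (G.IsCircLeaf v ↔ v ∈ P1)

/-- Node concurrency relation of the TFG: both nodes are positive in some
total, well-defined configuration whose restriction to `N2` is reachable. -/
def NodeConc (G : TFG V) (P2 : Set V) [DecidablePred (· ∈ P2)]
    (N2 : PetriNet ↥P2) (m2 : ↥P2 → ℕ) (v w : V) : Prop :=
  ∃ c, G.IsConfig c ∧ TotalConf c ∧ G.WellDef c ∧ N2.reach m2 (restrict c P2) ∧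
    0 < cval c v ∧ 0 < cval c w

namespace CNP
lemma mem_aggChildren {G : TFG V} {v w : V} : w ∈ G.aggChildren v ↔ (v, w) ∈ G.A := by
  constructor
  · intro h
    simp only [TFG.aggChildren, Finset.mem_image, Finset.mem_filter] at h
    obtain ⟨⟨a, b⟩, ⟨hmem, h1⟩, h2⟩ := h
    simp only at h1 h2
    subst h1; subst h2; exact hmem
  · intro h
    simp only [TFG.aggChildren, Finset.mem_image, Finset.mem_filter]
    exact ⟨(v, w), ⟨h, rfl⟩, rfl⟩
lemma mem_redParents {G : TFG V} {v p : V} : p ∈ G.redParents v ↔ (p, v) ∈ G.R := by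
  constructor
  · intro h
    simp only [TFG.redParents, Finset.mem_image, Finset.mem_filter] at h
    obtain ⟨⟨a, b⟩, ⟨hmem, h1⟩, h2⟩ := h
    simp only at h1 h2
    subst h1; subst h2; exact hmem
  · intro h
    simp only [TFG.redParents, Finset.mem_image, Finset.mem_filter]
    exact ⟨(p, v), ⟨h, rfl⟩, rfl⟩
lemma edge_of_agg {G : TFG V} {a w : V} (h : w ∈ G.aggChildren a) : G.Edge a w :=
  Or.inr (mem_aggChildren.mp h)
lemma edge_of_red {G : TFG V} {p v : V} (h : p ∈ G.redParents v) : G.Edge p v :=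
  Or.inl (mem_redParents.mp h)

lemma edge_wf (G : TFG V) (h5 : ∀ v, ¬ Relation.TransGen G.Edge v v) :
    WellFounded (fun a b : V => G.Edge a b) := by
  have hfin : ∀ z : V, {a | Relation.TransGen G.Edge a z}.Finite := by
    intro z
    apply Set.Finite.subset ((G.R ∪ G.A).image Prod.fst).finite_toSet
    rintro a ha
    obtain ⟨b, hab, -⟩ := Relation.TransGen.head'_iff.mp ha
    simp only [Finset.coe_image, Set.mem_image, Finset.mem_coe, Finset.mem_union]
    rcases hab with h | h
    · exact ⟨(a, b), Or.inl h, rfl⟩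
    · exact ⟨(a, b), Or.inr h, rfl⟩
  have key : ∀ a b : V, G.Edge a b →
      {x | Relation.TransGen G.Edge x a}.ncard < {x | Relation.TransGen G.Edge x b}.ncard := by
    intro a b hab
    apply Set.ncard_lt_ncard _ (hfin b)
    constructor
    · intro x hx
      exact hx.tail hab
    · intro hsub
      have ha : a ∈ {x | Relation.TransGen G.Edge x b} := Relation.TransGen.single hab
      exact h5 a (hsub ha)
  exact Subrelation.wf (fun {a b} h => key a b h)
    (InvImage.wf (fun z => {x | Relation.TransGen G.Edge x z}.ncard) Nat.lt_wfRel.wf)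


/-- distribute `k` among a list with capacities `cap`. -/
def distrib : ℕ → List V → (V → ℕ) → V → ℕ
  | _, [], _, _ => 0
  | k, a :: l, cap, z => if z = a then min k (cap a) else distrib (k - min k (cap a)) l cap z

lemma distrib_le_cap : ∀ (k : ℕ) (l : List V) (cap : V → ℕ) (z : V), distrib k l cap z ≤ cap z := by
  intro k l
  induction l generalizing k with
  | nil => intro cap z; simp [distrib]
  | cons a l IH =>
    intro cap z
    by_cases h : z = a
    · subst h; simp only [distrib, if_pos rfl]; exact min_le_right _ _
    · simp only [distrib, if_neg h]; exact IH _ cap z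

lemma distrib_le : ∀ (k : ℕ) (l : List V) (cap : V → ℕ) (z : V), distrib k l cap z ≤ k := by
  intro k l
  induction l generalizing k with
  | nil => intro cap z; simp [distrib]
  | cons a l IH =>
    intro cap z
    by_cases h : z = a
    · subst h; simp only [distrib, if_pos rfl]; exact min_le_left _ _
    · simp only [distrib, if_neg h]
      exact le_trans (IH _ cap z) (Nat.sub_le _ _)

lemma distrib_supp : ∀ (k : ℕ) (l : List V) (cap : V → ℕ) (z : V), z ∉ l → distrib k l cap z = 0 := by
  intro k l
  induction l generalizing k with
  | nil => intro cap z _; simp [distrib]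
  | cons a l IH =>
    intro cap z hz
    simp only [List.mem_cons, not_or] at hz
    simp only [distrib, if_neg hz.1]
    exact IH _ cap z hz.2

lemma distrib_sum : ∀ (k : ℕ) (l : List V) (cap : V → ℕ), l.Nodup → k ≤ (l.map cap).sum →
    (l.map (distrib k l cap)).sum = k := by
  intro k l
  induction l generalizing k with
  | nil => intro cap _ hk; simp at hk; simp [hk]
  | cons a l IH =>
    intro cap hnd hk
    simp only [List.map_cons, List.sum_cons] at hk ⊢
    have hnd' := List.nodup_cons.mp hnd
    have h1 : distrib k (a :: l) cap a = min k (cap a) := by simp [distrib]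
    have h2 : l.map (distrib k (a :: l) cap) = l.map (distrib (k - min k (cap a)) l cap) := by
      apply List.map_congr_left
      intro z hz
      have : z ≠ a := fun h => hnd'.1 (h ▸ hz)
      simp [distrib, if_neg this]
    rw [h1, h2, IH _ cap hnd'.2 (by omega)]
    omega

open Classical in
noncomputable def aparent (G : TFG V) (z : V) : V :=
  if h : ∃ p, (p, z) ∈ G.A then h.choose else z

lemma aparent_spec {G : TFG V} {z : V} (h : ∃ p, (p, z) ∈ G.A) : (aparent G z, z) ∈ G.A := by
  rw [aparent]; rw [dif_pos h]; exact h.choose_spec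

lemma exists_aparent {G : TFG V} {z : V} (h : z ∈ G.A.image Prod.snd) : ∃ p, (p, z) ∈ G.A := by
  obtain ⟨⟨a, b⟩, hm, he⟩ := Finset.mem_image.mp h
  simp only at he; subst he; exact ⟨a, hm⟩

noncomputable def pick (G : TFG V) (z : V) : V :=
  if h : (G.aggChildren z).Nonempty then h.choose else z

lemma pick_mem {G : TFG V} {z : V} (h : (G.aggChildren z).Nonempty) : pick G z ∈ G.aggChildren z := by
  rw [pick, dif_pos h]; exact h.choose_spec

variable (G : TFG V) (hwf : WellFounded (fun a b : V => G.Edge a b))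

noncomputable def cflow (cap : V → ℕ) (y : V) : V → ℕ :=
  hwf.fix (fun z rec =>
    if z = y then 1
    else if (G.redParents z).Nonempty then
      ∑ p ∈ (G.redParents z).attach, rec p.1 (edge_of_red p.2)
    else if hz : z ∈ G.A.image Prod.snd then
      distrib (rec (aparent G z) (Or.inr (aparent_spec (exists_aparent hz))))
        (G.aggChildren (aparent G z)).toList cap z
    else 0)

lemma cflow_eq (cap : V → ℕ) (y z : V) : cflow G hwf cap y z =
    if z = y then 1
    else if (G.redParents z).Nonempty then ∑ p ∈ G.redParents z, cflow G hwf cap y p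
    else if hz : z ∈ G.A.image Prod.snd then
      distrib (cflow G hwf cap y (aparent G z)) (G.aggChildren (aparent G z)).toList cap z
    else 0 := by
  conv_lhs => rw [cflow, WellFounded.fix_eq]
  simp only [Finset.sum_attach]
  rfl

noncomputable def uflow (y : V) : V → ℕ :=
  hwf.fix (fun z rec =>
    if z = y then 1
    else if (G.redParents z).Nonempty then
      ∑ p ∈ (G.redParents z).attach, rec p.1 (edge_of_red p.2)
    else if hz : z ∈ G.A.image Prod.snd then
      (if z = pick G (aparent G z) then
        rec (aparent G z) (Or.inr (aparent_spec (exists_aparent hz))) else 0)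
    else 0)

lemma uflow_eq (y z : V) : uflow G hwf y z =
    if z = y then 1
    else if (G.redParents z).Nonempty then ∑ p ∈ G.redParents z, uflow G hwf y p
    else if z ∈ G.A.image Prod.snd then
      (if z = pick G (aparent G z) then uflow G hwf y (aparent G z) else 0)
    else 0 := by
  conv_lhs => rw [uflow, WellFounded.fix_eq]
  simp only [Finset.sum_attach]
  rfl

/-- a unit flow out of `y`. -/
structure IsFlow (G : TFG V) (y : V) (f : V → ℕ) : Prop where
  src : f y = 1
  supp : ∀ z, z ∉ G.succs y → f z = 0
  agg : ∀ z, (G.aggChildren z).Nonempty → y ∉ G.aggChildren z →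
    f z = ∑ w ∈ G.aggChildren z, f w
  red : ∀ z, (G.redParents z).Nonempty → z ≠ y → f z = ∑ p ∈ G.redParents z, f p

section Props

lemma no_cycle (h5 : ∀ v, ¬ Relation.TransGen G.Edge v v) {a b : V} (h1 : G.Reach a b) (h2 : G.Edge b a) : False :=
  h5 a (Relation.TransGen.tail' h1 h2)

lemma reach_antisymm (h5 : ∀ v, ¬ Relation.TransGen G.Edge v v) {a b : V} (h1 : G.Reach a b) (h2 : G.Reach b a) : a = b := by
  rcases Relation.ReflTransGen.cases_head h1 with h | ⟨c, hac, hcb⟩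
  · exact h
  · exact absurd (Relation.TransGen.head' hac (hcb.trans h2)) (h5 a)

lemma red_empty (h3a : ∀ p p' q, (p, q) ∈ G.A → G.Edge p' q → p' = p)
    (h3b : ∀ p q, ¬((p, q) ∈ G.R ∧ (p, q) ∈ G.A)) {a x : V} (hx : x ∈ G.aggChildren a) : G.redParents x = ∅ := by
  rw [Finset.eq_empty_iff_forall_notMem]
  intro p hp
  have hpr : (p, x) ∈ G.R := mem_redParents.mp hp
  have : p = a := h3a a p x (mem_aggChildren.mp hx) (Or.inl hpr)
  subst this
  exact h3b p x ⟨hpr, mem_aggChildren.mp hx⟩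

lemma sibling_not_succ (h3a : ∀ p p' q, (p, q) ∈ G.A → G.Edge p' q → p' = p)
    (h5 : ∀ v, ¬ Relation.TransGen G.Edge v v) {a x w : V} (hx : x ∈ G.aggChildren a) (hw : w ∈ G.aggChildren a)
    (hwx : w ≠ x) : w ∉ G.succs x := by
  intro hws
  rcases Relation.ReflTransGen.cases_tail hws with h | ⟨q, hxq, hqw⟩
  · exact hwx h
  · have : q = a := h3a a q w (mem_aggChildren.mp hw) hqw
    subst this
    exact no_cycle G h5 hxq (edge_of_agg hx)

lemma cflow_spec (h3a : ∀ p p' q, (p, q) ∈ G.A → G.Edge p' q → p' = p)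
    (h3b : ∀ p q, ¬((p, q) ∈ G.R ∧ (p, q) ∈ G.A))
    (cap : V → ℕ) (y : V) (hy : 1 ≤ cap y)
    (hagg : ∀ z ∈ G.succs y, (G.aggChildren z).Nonempty →
      cap z = ∑ w ∈ G.aggChildren z, cap w)
    (hred : ∀ z ∈ G.succs y, z ≠ y → (G.redParents z).Nonempty →
      cap z = ∑ p ∈ G.redParents z, cap p) :
    (∀ z, cflow G hwf cap y z ≤ cap z) ∧ IsFlow G y (cflow G hwf cap y) := by
  set f := cflow G hwf cap y with hf
  have main : ∀ z, (z ∉ G.succs y → f z = 0) ∧ f z ≤ cap z := by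
    intro z
    refine WellFounded.induction hwf
      (C := fun z => (z ∉ G.succs y → f z = 0) ∧ f z ≤ cap z) z ?_
    intro z IH
    rw [hf, cflow_eq, ← hf]
    by_cases hzy : z = y
    · subst hzy
      rw [if_pos rfl]
      exact ⟨fun h => absurd Relation.ReflTransGen.refl h, hy⟩
    · rw [if_neg hzy]
      by_cases hr : (G.redParents z).Nonempty
      · rw [if_pos hr]
        have hsupp : z ∉ G.succs y → ∑ p ∈ G.redParents z, f p = 0 := by
          intro hzs
          apply Finset.sum_eq_zero
          intro p hp
          have hpe := edge_of_red hp
          exact (IH p hpe).1 (fun hps => hzs (hps.tail hpe))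
        refine ⟨hsupp, ?_⟩
        by_cases hzs : z ∈ G.succs y
        · calc ∑ p ∈ G.redParents z, f p ≤ ∑ p ∈ G.redParents z, cap p :=
                Finset.sum_le_sum (fun p hp => (IH p (edge_of_red hp)).2)
            _ = cap z := (hred z hzs hzy hr).symm
        · rw [hsupp hzs]; exact Nat.zero_le _
      · rw [if_neg hr]
        by_cases him : z ∈ G.A.image Prod.snd
        · rw [dif_pos him]
          have hqz : (aparent G z, z) ∈ G.A := aparent_spec (exists_aparent him)
          constructor
          · intro hzs
            have hq0 : f (aparent G z) = 0 :=
              (IH _ (Or.inr hqz)).1 (fun hqs => hzs (hqs.tail (Or.inr hqz)))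
            have hle := distrib_le (f (aparent G z)) (G.aggChildren (aparent G z)).toList cap z
            omega
          · exact distrib_le_cap _ _ _ _
        · rw [dif_neg him]
          exact ⟨fun _ => rfl, Nat.zero_le _⟩
  refine ⟨fun z => (main z).2, ?_, fun z => (main z).1, ?_, ?_⟩
  · rw [hf, cflow_eq, if_pos rfl]
  · -- agg
    intro z hne hyz
    have key : ∀ w ∈ G.aggChildren z,
        f w = distrib (f z) (G.aggChildren z).toList cap w := by
      intro w hw
      have hwz : (z, w) ∈ G.A := mem_aggChildren.mp hw
      have hwy : w ≠ y := fun h => hyz (h ▸ hw)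
      have hrw : ¬ (G.redParents w).Nonempty := by
        rw [red_empty G h3a h3b hw]; exact fun h => Finset.not_nonempty_empty h
      have him : w ∈ G.A.image Prod.snd := Finset.mem_image.mpr ⟨(z, w), hwz, rfl⟩
      have hq : aparent G w = z := h3a z (aparent G w) w hwz (Or.inr (aparent_spec ⟨z, hwz⟩))
      rw [hf, cflow_eq, ← hf, if_neg hwy, if_neg hrw, dif_pos him, hq]
    rw [Finset.sum_congr rfl key]
    by_cases hzs : z ∈ G.succs y
    · have hcapsum : f z ≤ ((G.aggChildren z).toList.map cap).sum := by
        rw [Finset.sum_map_toList]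
        calc f z ≤ cap z := (main z).2
          _ = ∑ w ∈ G.aggChildren z, cap w := hagg z hzs hne
      rw [← Finset.sum_map_toList]
      exact (distrib_sum _ _ _ (Finset.nodup_toList _) hcapsum).symm
    · have h0 : f z = 0 := (main z).1 hzs
      have hz0 : ∀ w ∈ G.aggChildren z, distrib (f z) (G.aggChildren z).toList cap w = 0 := by
        intro w _
        have := distrib_le (f z) (G.aggChildren z).toList cap w
        omega
      rw [Finset.sum_eq_zero hz0, h0]
  · -- red
    intro z hne hzy
    rw [hf, cflow_eq, ← hf, if_neg hzy, if_pos hne]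

lemma uflow_spec (h3a : ∀ p p' q, (p, q) ∈ G.A → G.Edge p' q → p' = p)
    (h3b : ∀ p q, ¬((p, q) ∈ G.R ∧ (p, q) ∈ G.A)) (y : V) : IsFlow G y (uflow G hwf y) := by
  set f := uflow G hwf y with hf
  have hsupp : ∀ z, z ∉ G.succs y → f z = 0 := by
    intro z
    refine WellFounded.induction hwf
      (C := fun z => z ∉ G.succs y → f z = 0) z ?_
    intro z IH hzs
    rw [hf, uflow_eq, ← hf]
    have hzy : z ≠ y := fun h => hzs (h ▸ Relation.ReflTransGen.refl)
    rw [if_neg hzy]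
    by_cases hr : (G.redParents z).Nonempty
    · rw [if_pos hr]
      apply Finset.sum_eq_zero
      intro p hp
      have hpe := edge_of_red hp
      exact IH p hpe (fun hps => hzs (hps.tail hpe))
    · rw [if_neg hr]
      by_cases him : z ∈ G.A.image Prod.snd
      · rw [if_pos him]
        have hqz : (aparent G z, z) ∈ G.A := aparent_spec (exists_aparent him)
        have hq0 : f (aparent G z) = 0 :=
          IH _ (Or.inr hqz) (fun hqs => hzs (hqs.tail (Or.inr hqz)))
        rw [hq0]; simp
      · rw [if_neg him]
  refine ⟨?_, hsupp, ?_, ?_⟩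
  · rw [hf, uflow_eq, if_pos rfl]
  · intro z hne hyz
    have key : ∀ w ∈ G.aggChildren z,
        f w = if w = pick G z then f z else 0 := by
      intro w hw
      have hwz : (z, w) ∈ G.A := mem_aggChildren.mp hw
      have hwy : w ≠ y := fun h => hyz (h ▸ hw)
      have hrw : ¬ (G.redParents w).Nonempty := by
        rw [red_empty G h3a h3b hw]; exact fun h => Finset.not_nonempty_empty h
      have him : w ∈ G.A.image Prod.snd := Finset.mem_image.mpr ⟨(z, w), hwz, rfl⟩
      have hq : aparent G w = z := h3a z (aparent G w) w hwz (Or.inr (aparent_spec ⟨z, hwz⟩))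
      rw [hf, uflow_eq, ← hf, if_neg hwy, if_neg hrw, if_pos him, hq]
    rw [Finset.sum_congr rfl key, Finset.sum_ite_eq' (G.aggChildren z) (pick G z) (fun _ => f z),
      if_pos (pick_mem hne)]
  · intro z hne hzy
    rw [hf, uflow_eq, ← hf, if_neg hzy, if_pos hne]

end Props

/-- full solution of the TFG equations -/
def Sol (G : TFG V) (s : V → ℕ) : Prop :=
  ∀ z, ((G.aggChildren z).Nonempty → s z = ∑ w ∈ G.aggChildren z, s w) ∧
    ((G.redParents z).Nonempty → s z = ∑ p ∈ G.redParents z, s p)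

section Combine

variable {G}

lemma sum_sub_add {S : Finset V} {F f g : V → ℕ} (h : ∀ x ∈ S, f x ≤ F x) :
    ∑ x ∈ S, (F x - f x + g x) =
      (∑ x ∈ S, F x) - (∑ x ∈ S, f x) + ∑ x ∈ S, g x := by
  rw [Finset.sum_add_distrib, Finset.sum_tsub_distrib _ h]

variable (h3a : ∀ p p' q, (p, q) ∈ G.A → G.Edge p' q → p' = p)
variable (h3b : ∀ p q, ¬((p, q) ∈ G.R ∧ (p, q) ∈ G.A))
variable (h5 : ∀ v, ¬ Relation.TransGen G.Edge v v)

lemma combine_core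
    (h3a : ∀ p p' q, (p, q) ∈ G.A → G.Edge p' q → p' = p)
    (h3b : ∀ p q, ¬((p, q) ∈ G.R ∧ (p, q) ∈ G.A))
    (h5 : ∀ v, ¬ Relation.TransGen G.Edge v v)
    {F f g : V → ℕ} {a u x : V}
    (hu : u ∈ G.aggChildren a) (hx : x ∈ G.aggChildren a) (hxu : x ≠ u)
    (hfl : IsFlow G x f) (hgl : IsFlow G u g) (hfF : ∀ z, f z ≤ F z) :
    (∀ z, (G.aggChildren z).Nonempty → F z = ∑ w ∈ G.aggChildren z, F w →
      F z - f z + g z = ∑ w ∈ G.aggChildren z, (F w - f w + g w)) ∧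
    (∀ z, (G.redParents z).Nonempty → F z = ∑ p ∈ G.redParents z, F p →
      F z - f z + g z = ∑ p ∈ G.redParents z, (F p - f p + g p)) := by
  have hanx : a ∉ G.succs x := fun h => no_cycle G h5 h (edge_of_agg hx)
  have hanu : a ∉ G.succs u := fun h => no_cycle G h5 h (edge_of_agg hu)
  constructor
  · intro z hne hbase
    rw [sum_sub_add (fun w _ => hfF w)]
    by_cases hza : z = a
    · subst hza
      have hfs : ∑ w ∈ G.aggChildren z, f w = 1 := by
        rw [Finset.sum_eq_single x]
        · exact hfl.src
        · intro b hb hbx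
          exact hfl.supp b (sibling_not_succ G h3a h5 hx hb hbx)
        · intro h; exact absurd hx h
      have hgs : ∑ w ∈ G.aggChildren z, g w = 1 := by
        rw [Finset.sum_eq_single u]
        · exact hgl.src
        · intro b hb hbu
          exact hgl.supp b (sibling_not_succ G h3a h5 hu hb hbu)
        · intro h; exact absurd hu h
      have hfa : f z = 0 := hfl.supp z hanx
      have hga : g z = 0 := hgl.supp z hanu
      have h1 : 1 ≤ ∑ w ∈ G.aggChildren z, F w := by
        calc 1 = ∑ w ∈ G.aggChildren z, f w := hfs.symm
          _ ≤ ∑ w ∈ G.aggChildren z, F w := Finset.sum_le_sum (fun w _ => hfF w)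
      rw [hfs, hgs, hfa, hga]
      omega
    · have hxz : x ∉ G.aggChildren z := by
        intro hmem
        exact hza (h3a a z x (mem_aggChildren.mp hx) (edge_of_agg hmem))
      have huz : u ∉ G.aggChildren z := by
        intro hmem
        exact hza (h3a a z u (mem_aggChildren.mp hu) (edge_of_agg hmem))
      have hfz := hfl.agg z hne hxz
      have hgz := hgl.agg z hne huz
      have := hfF z
      have h1 : ∑ w ∈ G.aggChildren z, f w ≤ ∑ w ∈ G.aggChildren z, F w :=
        Finset.sum_le_sum (fun w _ => hfF w)
      omega
  · intro z hne hbase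
    rw [sum_sub_add (fun p _ => hfF p)]
    have hzx : z ≠ x := by
      intro h; subst h
      rw [red_empty G h3a h3b hx] at hne
      exact Finset.not_nonempty_empty hne
    have hzu : z ≠ u := by
      intro h; subst h
      rw [red_empty G h3a h3b hu] at hne
      exact Finset.not_nonempty_empty hne
    have hfz := hfl.red z hne hzx
    have hgz := hgl.red z hne hzu
    have := hfF z
    have h1 : ∑ p ∈ G.redParents z, f p ≤ ∑ p ∈ G.redParents z, F p :=
      Finset.sum_le_sum (fun p _ => hfF p)
    omega

end Combine

section Steps

lemma astep (hwf : WellFounded (fun a b : V => G.Edge a b))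
    (h3a : ∀ p p' q, (p, q) ∈ G.A → G.Edge p' q → p' = p)
    (h3b : ∀ p q, ¬((p, q) ∈ G.R ∧ (p, q) ∈ G.A))
    (h5 : ∀ v, ¬ Relation.TransGen G.Edge v v)
    {s h : V → ℕ} {v a u : V}
    (hS : Sol G s) (hH : IsFlow G v h) (hhs : ∀ z, h z ≤ s z)
    (hha : 1 ≤ h a) (hau : u ∈ G.aggChildren a) (hva : G.Reach v a) :
    ∃ s' h', Sol G s' ∧ IsFlow G v h' ∧ (∀ z, h' z ≤ s' z) ∧ 1 ≤ h' u ∧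
      (∀ z, ¬(G.Reach a z ∧ z ≠ a) → s' z = s z ∧ h' z = h z) := by
  by_cases hu1 : 1 ≤ h u
  · exact ⟨s, h, hS, hH, hhs, hu1, fun z _ => ⟨rfl, rfl⟩⟩
  have hu0 : h u = 0 := by omega
  have hvagg : v ∉ G.aggChildren a := fun hmem => no_cycle G h5 hva (edge_of_agg hmem)
  have hsum : h a = ∑ w ∈ G.aggChildren a, h w := hH.agg a ⟨u, hau⟩ hvagg
  obtain ⟨x, hxa, hx1⟩ : ∃ x ∈ G.aggChildren a, 1 ≤ h x := by
    by_contra hc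
    push_neg at hc
    have hz : ∀ w ∈ G.aggChildren a, h w = 0 := fun w hw => by have := hc w hw; omega
    rw [Finset.sum_eq_zero hz] at hsum
    omega
  have hxu : x ≠ u := fun h' => by rw [h'] at hx1; omega
  have hvx : G.Reach v x := hva.tail (edge_of_agg hxa)
  have hvu : G.Reach v u := hva.tail (edge_of_agg hau)
  have hvnsx : v ∉ G.succs x := by
    intro hh
    have hxv : x = v := reach_antisymm G h5 hh hvx
    exact no_cycle G h5 hva (hxv ▸ edge_of_agg hxa)
  have hvnsu : v ∉ G.succs u := by
    intro hh
    have huv : u = v := reach_antisymm G h5 hh hvu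
    exact no_cycle G h5 hva (huv ▸ edge_of_agg hau)
  have hcagg : ∀ z ∈ G.succs x, (G.aggChildren z).Nonempty →
      h z = ∑ w ∈ G.aggChildren z, h w := by
    intro z hzs hne
    apply hH.agg z hne
    intro hmem
    exact no_cycle G h5 (hvx.trans hzs) (edge_of_agg hmem)
  have hcred : ∀ z ∈ G.succs x, z ≠ x → (G.redParents z).Nonempty →
      h z = ∑ p ∈ G.redParents z, h p := by
    intro z hzs hzx hne
    apply hH.red z hne
    intro hzv
    subst hzv
    exact hvnsx hzs
  obtain ⟨hfle, hfl⟩ := cflow_spec G hwf h3a h3b h x hx1 hcagg hcred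
  set f := cflow G hwf h x with hfdef
  have hgl := uflow_spec G hwf h3a h3b u
  set g := uflow G hwf u with hgdef
  have hfs : ∀ z, f z ≤ s z := fun z => le_trans (hfle z) (hhs z)
  obtain ⟨hcAs, hcRs⟩ := combine_core h3a h3b h5 hau hxa hxu hfl hgl hfs
  obtain ⟨hcAh, hcRh⟩ := combine_core h3a h3b h5 hau hxa hxu hfl hgl hfle
  have hzero : ∀ z, ¬(G.Reach a z ∧ z ≠ a) → f z = 0 ∧ g z = 0 := by
    intro z hz
    constructor
    · apply hfl.supp z
      intro hxz
      apply hz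
      refine ⟨(Relation.ReflTransGen.single (edge_of_agg hxa)).trans hxz, ?_⟩
      intro h'
      subst h'
      exact no_cycle G h5 hxz (edge_of_agg hxa)
    · apply hgl.supp z
      intro huz
      apply hz
      refine ⟨(Relation.ReflTransGen.single (edge_of_agg hau)).trans huz, ?_⟩
      intro h'
      subst h'
      exact no_cycle G h5 huz (edge_of_agg hau)
  refine ⟨fun z => s z - f z + g z, fun z => h z - f z + g z, ?_, ?_, ?_, ?_, ?_⟩
  · intro z
    exact ⟨fun hne => hcAs z hne ((hS z).1 hne), fun hne => hcRs z hne ((hS z).2 hne)⟩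
  · refine ⟨?_, ?_, ?_, ?_⟩
    · rw [hfl.supp v hvnsx, hgl.supp v hvnsu, hH.src]
    · intro z hzs
      rw [hfl.supp z (fun hh => hzs (hvx.trans hh)), hgl.supp z (fun hh => hzs (hvu.trans hh)),
        hH.supp z hzs]
    · intro z hne hvz
      exact hcAh z hne (hH.agg z hne hvz)
    · intro z hne hzv
      exact hcRh z hne (hH.red z hne hzv)
  · intro z
    show h z - f z + g z ≤ s z - f z + g z
    have h1 := hfle z
    have h2 := hhs z
    omega
  · show 1 ≤ h u - f u + g u
    have h1 := hgl.src
    have h2 := hfle u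
    omega
  · intro z hz
    obtain ⟨hf0, hg0⟩ := hzero z hz
    constructor
    · show s z - f z + g z = s z
      rw [hf0, hg0]
      omega
    · show h z - f z + g z = h z
      rw [hf0, hg0]
      omega

lemma phase1 (hwf : WellFounded (fun a b : V => G.Edge a b))
    (h3a : ∀ p p' q, (p, q) ∈ G.A → G.Edge p' q → p' = p)
    (h3b : ∀ p q, ¬((p, q) ∈ G.R ∧ (p, q) ∈ G.A))
    (h5 : ∀ v, ¬ Relation.TransGen G.Edge v v)
    {v v' : V} :
    ∀ a, G.Reach a v' → ∀ s h, Sol G s → IsFlow G v h → (∀ z, h z ≤ s z) → 1 ≤ h a →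
      G.Reach v a →
      ∃ s' h', Sol G s' ∧ IsFlow G v h' ∧ (∀ z, h' z ≤ s' z) ∧ 1 ≤ h' v' ∧
        (∀ z, ¬(G.Reach v z ∧ z ≠ v) → s' z = s z ∧ h' z = h z) := by
  intro a ha
  induction ha using Relation.ReflTransGen.head_induction_on with
  | refl =>
    intro s h hS hH hhs h1 _
    exact ⟨s, h, hS, hH, hhs, h1, fun z _ => ⟨rfl, rfl⟩⟩
  | @head a c hac hcv IH =>
    intro s h hS hH hhs h1 hva
    have hvc : G.Reach v c := hva.tail hac
    have hcondlift : ∀ z, ¬(G.Reach v z ∧ z ≠ v) → ¬(G.Reach a z ∧ z ≠ a) := by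
      rintro z hz ⟨haz, hza⟩
      apply hz
      refine ⟨hva.trans haz, ?_⟩
      intro h'
      subst h'
      exact hza (reach_antisymm G h5 haz hva).symm
    rcases hac with hR | hA
    · have hmem : a ∈ G.redParents c := mem_redParents.mpr hR
      have hcne : c ≠ v := by
        intro h'
        subst h'
        exact no_cycle G h5 hva (Or.inl hR)
      have hred := hH.red c ⟨a, hmem⟩ hcne
      have hle := Finset.single_le_sum (f := h) (fun p _ => Nat.zero_le _) hmem
      exact IH s h hS hH hhs (by omega) hvc
    · have hau : c ∈ G.aggChildren a := mem_aggChildren.mpr hA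
      obtain ⟨s1, h1', hS1, hH1, hhs1, hc1, hpres1⟩ :=
        astep G hwf h3a h3b h5 hS hH hhs h1 hau hva
      obtain ⟨s2, h2, hS2, hH2, hhs2, hv'1, hpres2⟩ :=
        IH s1 h1' hS1 hH1 hhs1 hc1 hvc
      refine ⟨s2, h2, hS2, hH2, hhs2, hv'1, ?_⟩
      intro z hz
      obtain ⟨e2s, e2h⟩ := hpres2 z hz
      obtain ⟨e1s, e1h⟩ := hpres1 z (hcondlift z hz)
      exact ⟨e2s.trans e1s, e2h.trans e1h⟩

lemma phase2 (hwf : WellFounded (fun a b : V => G.Edge a b))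
    (h3a : ∀ p p' q, (p, q) ∈ G.A → G.Edge p' q → p' = p)
    (h3b : ∀ p q, ¬((p, q) ∈ G.R ∧ (p, q) ∈ G.A))
    (h5 : ∀ v, ¬ Relation.TransGen G.Edge v v)
    {v w' : V} {h : V → ℕ} (hH : IsFlow G v h) :
    ∀ b, G.Reach b w' → ∀ s, Sol G s → (∀ z, h z ≤ s z) → 1 ≤ s b - h b → v ∉ G.succs b →
      ∃ s', Sol G s' ∧ (∀ z, h z ≤ s' z) ∧ 1 ≤ s' w' ∧
        (∀ z, ¬(G.Reach b z ∧ z ≠ b) → s' z = s z) := by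
  intro b hb
  induction hb using Relation.ReflTransGen.head_induction_on with
  | refl =>
    intro s hS hhs h1 _
    exact ⟨s, hS, hhs, by omega, fun z _ => rfl⟩
  | @head b c hbc hcw IH =>
    intro s hS hhs h1 hvb
    have hvnc : v ∉ G.succs c := fun hvc => hvb ((Relation.ReflTransGen.single hbc).trans hvc)
    have hcondlift : ∀ z, ¬(G.Reach b z ∧ z ≠ b) → ¬(G.Reach c z ∧ z ≠ c) := by
      rintro z hz ⟨hcz, hzc⟩
      apply hz
      refine ⟨(Relation.ReflTransGen.single hbc).trans hcz, ?_⟩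
      intro h'
      subst h'
      exact h5 z (Relation.TransGen.head' hbc hcz)
    rcases hbc with hR | hA
    · have hmem : b ∈ G.redParents c := mem_redParents.mpr hR
      have hcv : c ≠ v := by
        intro h'
        exact hvb (h' ▸ Relation.ReflTransGen.single (Or.inl hR))
      have hsc := (hS c).2 ⟨b, hmem⟩
      have hhc := hH.red c ⟨b, hmem⟩ hcv
      have hkey : s b - h b ≤ s c - h c := by
        have hds : ∑ p ∈ G.redParents c, (s p - h p) =
            (∑ p ∈ G.redParents c, s p) - ∑ p ∈ G.redParents c, h p :=
          Finset.sum_tsub_distrib _ (fun p _ => hhs p)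
        have hsing : s b - h b ≤ ∑ p ∈ G.redParents c, (s p - h p) :=
          Finset.single_le_sum (f := fun p => s p - h p) (fun p _ => Nat.zero_le _) hmem
        omega
      obtain ⟨s', hS', hhs', hw1, hpres⟩ := IH s hS hhs (by omega) hvnc
      exact ⟨s', hS', hhs', hw1, fun z hz => hpres z (hcondlift z hz)⟩
    · have hcagg : c ∈ G.aggChildren b := mem_aggChildren.mpr hA
      have hvbagg : v ∉ G.aggChildren b := fun hmem =>
        hvb (Relation.ReflTransGen.single (edge_of_agg hmem))
      have hsb := (hS b).1 ⟨c, hcagg⟩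
      have hhb := hH.agg b ⟨c, hcagg⟩ hvbagg
      by_cases hc1 : 1 ≤ s c - h c
      · obtain ⟨s', hS', hhs', hw1, hpres⟩ := IH s hS hhs hc1 hvnc
        exact ⟨s', hS', hhs', hw1, fun z hz => hpres z (hcondlift z hz)⟩
      · obtain ⟨x, hxb, hx1⟩ : ∃ x ∈ G.aggChildren b, 1 ≤ s x - h x := by
          by_contra hc
          push_neg at hc
          have heq : ∀ w ∈ G.aggChildren b, s w = h w := by
            intro w hw
            have := hc w hw
            have := hhs w
            omega
          have : ∑ w ∈ G.aggChildren b, s w = ∑ w ∈ G.aggChildren b, h w :=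
            Finset.sum_congr rfl heq
          omega
        have hxc : x ≠ c := fun h' => hc1 (h' ▸ hx1)
        have hbx : G.Reach b x := Relation.ReflTransGen.single (edge_of_agg hxb)
        have hcapagg : ∀ z ∈ G.succs x, (G.aggChildren z).Nonempty →
            s z - h z = ∑ w ∈ G.aggChildren z, (s w - h w) := by
          intro z hzs hne
          have h1s := (hS z).1 hne
          have hvagg : v ∉ G.aggChildren z := fun hm =>
            hvb ((hbx.trans hzs).tail (edge_of_agg hm))
          have h1h := hH.agg z hne hvagg
          rw [Finset.sum_tsub_distrib _ (fun w _ => hhs w), ← h1s, ← h1h]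
        have hcapred : ∀ z ∈ G.succs x, z ≠ x → (G.redParents z).Nonempty →
            s z - h z = ∑ p ∈ G.redParents z, (s p - h p) := by
          intro z hzs hzx hne
          have h1s := (hS z).2 hne
          have hzv : z ≠ v := by
            intro h'
            subst h'
            exact hvb (hbx.trans hzs)
          have h1h := hH.red z hne hzv
          rw [Finset.sum_tsub_distrib _ (fun p _ => hhs p), ← h1s, ← h1h]
        obtain ⟨hfle, hfl⟩ := cflow_spec G hwf h3a h3b (fun z => s z - h z) x hx1 hcapagg hcapred
        set f := cflow G hwf (fun z => s z - h z) x with hfdef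
        have hgl := uflow_spec G hwf h3a h3b c
        set g := uflow G hwf c with hgdef
        have hfs : ∀ z, f z ≤ s z := fun z => le_trans (hfle z) (Nat.sub_le _ _)
        obtain ⟨hcA, hcR⟩ := combine_core h3a h3b h5 hcagg hxb hxc hfl hgl hfs
        have hS1 : Sol G (fun z => s z - f z + g z) := by
          intro z
          exact ⟨fun hne => hcA z hne ((hS z).1 hne), fun hne => hcR z hne ((hS z).2 hne)⟩
        have hhs1 : ∀ z, h z ≤ s z - f z + g z := by
          intro z
          have := hfle z
          have := hhs z
          omega
        have hinv : 1 ≤ (s c - f c + g c) - h c := by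
          have := hgl.src
          have := hfle c
          have := hhs c
          omega
        obtain ⟨s2, hS2, hhs2, hw1, hpres⟩ := IH (fun z => s z - f z + g z) hS1 hhs1 hinv hvnc
        refine ⟨s2, hS2, hhs2, hw1, ?_⟩
        intro z hz
        have e2 := hpres z (hcondlift z hz)
        have hf0 : f z = 0 := by
          apply hfl.supp z
          intro hxz
          apply hz
          refine ⟨hbx.trans hxz, ?_⟩
          intro h'
          subst h'
          exact no_cycle G h5 hxz (edge_of_agg hxb)
        have hg0 : g z = 0 := by
          apply hgl.supp z
          intro hcz
          apply hz
          refine ⟨(Relation.ReflTransGen.single (edge_of_agg hcagg)).trans hcz, ?_⟩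
          intro h'
          subst h'
          exact no_cycle G h5 hcz (edge_of_agg hcagg)
        rw [e2, hf0, hg0]
        omega

end Steps

end CNP

theorem concurrent_nodes_propagation {V : Type} [DecidableEq V] (G : TFG V) (E : EqSys V)
    (P1 P2 : Set V) [DecidablePred (· ∈ P1)] [DecidablePred (· ∈ P2)]
    (N1 : PetriNet ↥P1) (m1 : ↥P1 → ℕ) (N2 : PetriNet ↥P2) (m2 : ↥P2 → ℕ)
    (hwf : WellFormed G E P1 P2) (heq : EEquiv E P1 P2 N1 m1 N2 m2)
    (hsafe1 : N1.Safe m1) (hsafe2 : N2.Safe m2)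
    (v w : V) (hvw : NodeConc G P2 N2 m2 v w)
    (hv : v ∉ G.succs w) (hw : w ∉ G.succs v) :
    ∀ v' ∈ G.succs v, ∀ w' ∈ G.succs w, NodeConc G P2 N2 m2 v' w' := by

  intro v' hv' w' hw'
  obtain ⟨c, hcfg, htot, hwd, hreach, hvpos, hwpos⟩ := hvw
  set s : V → ℕ := cval c with hsdef
  have hsome : ∀ z, c z = some (s z) := by
    intro z
    obtain ⟨n, hn⟩ := Option.ne_none_iff_exists'.mp (htot z)
    rw [hn]
    simp [hsdef, cval, hn]
  have hS : CNP.Sol G s := by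
    intro z
    have h2 := hwd.2 z (s z) (hsome z)
    exact ⟨fun hne => h2.1 hne, fun hne => h2.2 hne⟩
  have h3a := hwf.T3a
  have h3b := hwf.T3b
  have h5 := hwf.T5
  have hwfE := CNP.edge_wf G h5
  have hv1 : 1 ≤ s v := hvpos
  have hw1 : 1 ≤ s w := hwpos
  obtain ⟨h0le, h0fl⟩ := CNP.cflow_spec G hwfE h3a h3b s v hv1
    (fun z _ hne => (hS z).1 hne) (fun z _ _ hne => (hS z).2 hne)
  obtain ⟨s1, h1, hS1, hH1, hhs1, h1v', hpres1⟩ :=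
    CNP.phase1 G hwfE h3a h3b h5 v hv' s (CNP.cflow G hwfE s v) hS h0fl h0le
      (le_of_eq h0fl.src.symm) Relation.ReflTransGen.refl
  have hwv : ¬(G.Reach v w ∧ w ≠ v) := fun hh => hw hh.1
  obtain ⟨e1sw, e1hw⟩ := hpres1 w hwv
  have hh1w : h1 w = 0 := by rw [e1hw]; exact h0fl.supp w hw
  have hinit2 : 1 ≤ s1 w - h1 w := by rw [e1sw, hh1w]; omega
  obtain ⟨s2, hS2, hhs2, hw'1, hpres2⟩ :=
    CNP.phase2 G hwfE h3a h3b h5 hH1 w hw' s1 hS1 hhs1 hinit2 hv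
  have hv'1 : 1 ≤ s2 v' := le_trans h1v' (hhs2 v')
  have hroot_pres : ∀ z, G.IsRoot z → s2 z = s z := by
    intro z hrz
    have hnz : ∀ y0 : V, ¬(G.Reach y0 z ∧ z ≠ y0) := by
      rintro y0 ⟨hrzz, hne⟩
      rcases Relation.ReflTransGen.cases_tail hrzz with hh | ⟨q, _, hq⟩
      · exact hne hh
      · exact hrz q hq
    rw [hpres2 z (hnz w), (hpres1 z (hnz v)).1]
  refine ⟨fun z => some (s2 z), ?_, ?_, ⟨?_, ?_⟩, ?_, ?_, ?_⟩
  · intro z n hk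
    have hrz : G.IsRoot z := hwf.T2 z (by rw [hk]; exact Option.some_ne_none n)
    have hsz : s z = n := by
      have h1' := hcfg z n hk
      have h2' := hsome z
      rw [h1'] at h2'
      exact (Option.some.injEq _ _ ▸ h2').symm
    show some (s2 z) = some n
    rw [hroot_pres z hrz, hsz]
  · exact fun z => Option.some_ne_none _
  · intro a b _
    simp
  · intro z n hn
    have hzn : s2 z = n := Option.some_injective _ hn
    constructor
    · intro hne
      rw [← hzn]
      exact (hS2 z).1 hne
    · intro hne
      rw [← hzn]
      exact (hS2 z).2 hne
  · have hres : restrict (fun z => some (s2 z)) P2 = restrict c P2 := by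
      funext p
      have hp2 : (↑p : V) ∈ P2 := p.2
      have hknone : G.kval ↑p = none := by
        have h1' : (↑p : V) ∈ {v | G.kval v = none} := by
          rw [hwf.T1]
          exact Or.inl (Or.inr hp2)
        exact h1'
      have hrootp : G.IsRoot ↑p := (hwf.T6root _ hknone).mpr hp2
      show s2 ↑p = cval c ↑p
      exact hroot_pres _ hrootp
    rw [hres]
    exact hreach
  · exact hv'1
  · exact hw'1
end

section
/- Let G(E) be a well-formed TFG for (N1,m1) ▷_E (N2,m2), with both nets safe, and C its node concurrency relation. If v C v (v nondead) and there is a redundancy arc v →• w, then v' C w' for every pair (v',w') with v' ∈ succ(v) \ succ(w) and w' ∈ succ(w). -/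
open Finset

variable {V : Type} [DecidableEq V]

section AuxTFG

variable {V : Type} [DecidableEq V]

namespace TFGAux

lemma mem_redParents {G : TFG V} {p m : V} : p ∈ G.redParents m ↔ (p, m) ∈ G.R := by
  simp only [TFG.redParents, Finset.mem_image, Finset.mem_filter, Prod.exists]
  constructor
  · rintro ⟨a, b, ⟨h, rfl⟩, rfl⟩; exact h
  · intro h; exact ⟨p, m, ⟨h, rfl⟩, rfl⟩

lemma mem_aggChildren {G : TFG V} {p w : V} : w ∈ G.aggChildren p ↔ (p, w) ∈ G.A := by
  simp only [TFG.aggChildren, Finset.mem_image, Finset.mem_filter, Prod.exists]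
  constructor
  · rintro ⟨a, b, ⟨h, rfl⟩, rfl⟩; exact h
  · intro h; exact ⟨p, w, ⟨h, rfl⟩, rfl⟩

/-- Acyclicity + finitely many arcs implies the edge relation is well-founded. -/
lemma edge_wf (G : TFG V) (hT5 : ∀ v, ¬ Relation.TransGen G.Edge v v) :
    WellFounded (fun a b : V => G.Edge a b) := by
  have hsub : ∀ b : V, {a : V | Relation.TransGen G.Edge a b} ⊆
      ↑((G.R ∪ G.A).image Prod.fst) := by
    intro b a ha
    have hex : ∃ c, G.Edge a c := by
      induction ha with
      | single h => exact ⟨_, h⟩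
      | tail _ _ ih => exact ih
    obtain ⟨c, hc⟩ := hex
    simp only [Finset.coe_image, Set.mem_image, Finset.mem_coe, Finset.mem_union]
    rcases hc with h | h
    · exact ⟨(a, c), Or.inl h, rfl⟩
    · exact ⟨(a, c), Or.inr h, rfl⟩
  have hfin : ∀ b : V, {a : V | Relation.TransGen G.Edge a b}.Finite :=
    fun b => Set.Finite.subset (Finset.finite_toSet _) (hsub b)
  have key : ∀ a b : V, G.Edge a b →
      {x | Relation.TransGen G.Edge x a}.ncard < {x | Relation.TransGen G.Edge x b}.ncard := by
    intro a b h
    apply Set.ncard_lt_ncard _ (hfin b)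
    rw [ssubset_iff_subset_not_subset]
    constructor
    · intro x hx; exact hx.tail h
    · intro hsup
      exact hT5 a (hsup (Relation.TransGen.single h))
  exact Subrelation.wf (fun {a b} h => key a b h)
    (InvImage.wf (fun x => {y | Relation.TransGen G.Edge y x}.ncard) Nat.lt_wfRel.wf)

lemma no_self_reach {G : TFG V} (hT5 : ∀ v, ¬ Relation.TransGen G.Edge v v)
    {a b : V} (h1 : G.Edge a b) (h2 : G.Reach b a) : False :=
  hT5 b (Relation.TransGen.tail' h2 h1)

lemma redParents_eq_empty {G : TFG V} (hT3a : ∀ p p' q, (p, q) ∈ G.A → G.Edge p' q → p' = p)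
    (hT3b : ∀ p q, ¬((p, q) ∈ G.R ∧ (p, q) ∈ G.A))
    {x m : V} (hxm : (x, m) ∈ G.A) : G.redParents m = ∅ := by
  rw [Finset.eq_empty_iff_forall_notMem]
  intro p hp
  rw [mem_redParents] at hp
  have := hT3a x p m hxm (Or.inl hp)
  subst this
  exact hT3b p m ⟨hp, hxm⟩

lemma agg_parent_unique {G : TFG V} (hT3a : ∀ p p' q, (p, q) ∈ G.A → G.Edge p' q → p' = p)
    {p p' m : V} (h : (p, m) ∈ G.A) (h' : (p', m) ∈ G.A) : p' = p :=
  hT3a p p' m h (Or.inr h')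

/-- Equation system satisfied by a total configuration. -/
def GoodEq (G : TFG V) (s : V → ℕ) : Prop :=
  (∀ m, (G.aggChildren m).Nonempty → s m = ∑ w ∈ G.aggChildren m, s w) ∧
  (∀ m, (G.redParents m).Nonempty → s m = ∑ w ∈ G.redParents m, s w)

/-- Splitting a budget `k` among a finite set with capacities `cap`. -/
lemma exists_alloc (X : Finset V) (cap : V → ℕ) :
    ∀ k, k ≤ ∑ w ∈ X, cap w →
      ∃ f : V → ℕ, (∀ w, f w ≤ cap w) ∧ (∀ w, w ∉ X → f w = 0) ∧ ∑ w ∈ X, f w = k := by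
  classical
  induction X using Finset.induction_on with
  | empty =>
    intro k hk
    simp only [Finset.sum_empty, Nat.le_zero] at hk
    exact ⟨fun _ => 0, fun w => Nat.zero_le _, fun w _ => rfl, by simp [hk]⟩
  | insert _ _ ha ih =>
    rename_i a X
    intro k hk
    rw [Finset.sum_insert ha] at hk
    obtain ⟨f, h1, h2, h3⟩ := ih (k - min k (cap a)) (by omega)
    refine ⟨fun w => if w = a then min k (cap a) else f w, ?_, ?_, ?_⟩
    · intro w
      by_cases h : w = a
      · simp only [if_pos h, h]; exact min_le_right _ _
      · simp only [if_neg h]; exact h1 w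
    · intro w hw
      have hne : w ≠ a := by rintro rfl; exact hw (Finset.mem_insert_self _ _)
      simp only [if_neg hne]
      exact h2 w (fun hwX => hw (Finset.mem_insert_of_mem hwX))
    · rw [Finset.sum_insert ha, if_pos rfl]
      have hc : ∑ w ∈ X, (if w = a then min k (cap a) else f w) = ∑ w ∈ X, f w :=
        Finset.sum_congr rfl (fun w hw => by
          have : w ≠ a := fun h => ha (h ▸ hw)
          simp [this])
      rw [hc, h3]; omega

end TFGAux
end AuxTFG
section AuxFlow

variable {V : Type} [DecidableEq V]

namespace TFGAux

open Classical in
/-- Recursion functional for unit flows. -/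
noncomputable def flowF (G : TFG V) (dist : V → ℕ → V → ℕ) (z : V) :
    (m : V) → ((p : V) → G.Edge p m → ℕ) → ℕ :=
  fun m ih =>
    if m = z then 1
    else if h : ∃ p, (p, m) ∈ G.A then
      dist h.choose (ih h.choose (Or.inr h.choose_spec)) m
    else if _h2 : (G.redParents m).Nonempty then
      ∑ p ∈ (G.redParents m).attach, ih p.1 (Or.inl (mem_redParents.1 p.2))
    else 0

/-- A "unit flow" from `z`, recursively defined along the DAG. -/
noncomputable def flow (G : TFG V) (dist : V → ℕ → V → ℕ) (z : V)
    (wf : WellFounded (fun a b : V => G.Edge a b)) : V → ℕ :=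
  wf.fix (flowF G dist z)

lemma flow_eq (G : TFG V) (dist : V → ℕ → V → ℕ) (z : V)
    (wf : WellFounded (fun a b : V => G.Edge a b)) (m : V) :
    flow G dist z wf m = flowF G dist z m (fun p _ => flow G dist z wf p) := by
  rw [flow]
  exact WellFounded.fix_eq wf _ m

lemma flow_z (G : TFG V) (dist : V → ℕ → V → ℕ) (z : V)
    (wf : WellFounded (fun a b : V => G.Edge a b)) :
    flow G dist z wf z = 1 := by
  rw [flow_eq, flowF, if_pos rfl]

open Classical in
lemma flow_child (G : TFG V) (dist : V → ℕ → V → ℕ) (z : V)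
    (wf : WellFounded (fun a b : V => G.Edge a b))
    (hT3a : ∀ p p' q, (p, q) ∈ G.A → G.Edge p' q → p' = p)
    {p m : V} (hm : (p, m) ∈ G.A) (hmz : m ≠ z) :
    flow G dist z wf m = dist p (flow G dist z wf p) m := by
  rw [flow_eq, flowF]
  simp only [if_neg hmz]
  have h : ∃ q, (q, m) ∈ G.A := ⟨p, hm⟩
  rw [dif_pos h]
  have hcp : h.choose = p := hT3a p h.choose m hm (Or.inr h.choose_spec)
  rw [hcp]

lemma flow_red (G : TFG V) (dist : V → ℕ → V → ℕ) (z : V)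
    (wf : WellFounded (fun a b : V => G.Edge a b))
    (hT3a : ∀ p p' q, (p, q) ∈ G.A → G.Edge p' q → p' = p)
    (hT3b : ∀ p q, ¬((p, q) ∈ G.R ∧ (p, q) ∈ G.A))
    (hzr : G.redParents z = ∅)
    {m : V} (hm : (G.redParents m).Nonempty) :
    flow G dist z wf m = ∑ p ∈ G.redParents m, flow G dist z wf p := by
  have hmz : m ≠ z := by rintro rfl; rw [hzr] at hm; exact Finset.not_nonempty_empty hm
  rw [flow_eq, flowF]
  simp only [if_neg hmz]
  have hnoA : ¬ ∃ p, (p, m) ∈ G.A := by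
    rintro ⟨p, hp⟩
    rw [redParents_eq_empty hT3a hT3b hp] at hm
    exact Finset.not_nonempty_empty hm
  rw [dif_neg hnoA, dif_pos hm]
  exact Finset.sum_attach _ _

lemma flow_supp (G : TFG V) (dist : V → ℕ → V → ℕ) (z : V)
    (wf : WellFounded (fun a b : V => G.Edge a b))
    (hdist0 : ∀ p w, dist p 0 w = 0) :
    ∀ u, flow G dist z wf u ≠ 0 → G.Reach z u := by
  intro u
  induction u using wf.induction with
  | _ u ih =>
    intro hu
    rw [flow_eq, flowF] at hu
    split at hu
    · subst ‹u = z›; exact Relation.ReflTransGen.refl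
    · split at hu
      · rename_i h
        have hp : flow G dist z wf h.choose ≠ 0 := by
          intro h0; rw [h0, hdist0] at hu; exact hu rfl
        exact (ih h.choose (Or.inr h.choose_spec) hp).tail (Or.inr h.choose_spec)
      · split at hu
        · obtain ⟨p, hp, hpne⟩ := Finset.exists_ne_zero_of_sum_ne_zero hu
          exact (ih p.1 (Or.inl (mem_redParents.1 p.2)) hpne).tail
            (Or.inl (mem_redParents.1 p.2))
        · exact absurd rfl hu

end TFGAux
end AuxFlow
section AuxDist

variable {V : Type} [DecidableEq V]

namespace TFGAux

open Classical in
/-- Capacity-respecting distribution of a budget among agglomeration children. -/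
noncomputable def bDist (G : TFG V) (s : V → ℕ) (p : V) (k : ℕ) : V → ℕ :=
  if h : k ≤ ∑ w ∈ G.aggChildren p, s w then (exists_alloc (G.aggChildren p) s k h).choose
  else fun _ => 0

open Classical in
lemma bDist_le (G : TFG V) (s : V → ℕ) (p : V) (k : ℕ) (w : V) : bDist G s p k w ≤ s w := by
  rw [bDist]
  split
  · exact (exists_alloc (G.aggChildren p) s k ‹_›).choose_spec.1 w
  · exact Nat.zero_le _

open Classical in
lemma bDist_sum (G : TFG V) (s : V → ℕ) (p : V) (k : ℕ)
    (h : k ≤ ∑ w ∈ G.aggChildren p, s w) :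
    ∑ w ∈ G.aggChildren p, bDist G s p k w = k := by
  rw [bDist, dif_pos h]
  exact (exists_alloc (G.aggChildren p) s k h).choose_spec.2.2

open Classical in
lemma bDist0 (G : TFG V) (s : V → ℕ) (p : V) (w : V) : bDist G s p 0 w = 0 := by
  have h : (0 : ℕ) ≤ ∑ w ∈ G.aggChildren p, s w := Nat.zero_le _
  rw [bDist, dif_pos h]
  obtain ⟨h1, h2, h3⟩ := (exists_alloc (G.aggChildren p) s 0 h).choose_spec
  by_cases hw : w ∈ G.aggChildren p
  · have := Finset.single_le_sum (f := (exists_alloc (G.aggChildren p) s 0 h).choose)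
      (fun _ _ => Nat.zero_le _) hw
    omega
  · exact h2 w hw

open Classical in
/-- Free distribution: the whole budget goes to one chosen child. -/
noncomputable def fDist (G : TFG V) (p : V) (k : ℕ) : V → ℕ :=
  fun w => if h : (G.aggChildren p).Nonempty then (if w = h.choose then k else 0) else 0

open Classical in
lemma fDist0 (G : TFG V) (p : V) (w : V) : fDist G p 0 w = 0 := by
  rw [fDist]; split <;> simp

open Classical in
lemma fDist_sum (G : TFG V) (p : V) (k : ℕ) (h : (G.aggChildren p).Nonempty) :
    ∑ w ∈ G.aggChildren p, fDist G p k w = k := by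
  simp only [fDist, dif_pos h]
  rw [Finset.sum_ite_eq' (G.aggChildren p) h.choose (fun _ => k)]
  rw [if_pos h.choose_spec]

lemma flow_le_bounded (G : TFG V) (s : V → ℕ) (hs : GoodEq G s) (z : V) (hz : 1 ≤ s z)
    (wf : WellFounded (fun a b : V => G.Edge a b)) :
    ∀ u, flow G (bDist G s) z wf u ≤ s u := by
  intro u
  induction u using wf.induction with
  | _ u ih =>
    rw [flow_eq, flowF]
    split
    · subst ‹u = z›; exact hz
    · split
      · exact bDist_le G s _ _ u
      · split
        · rename_i h1 h2
          calc ∑ p ∈ (G.redParents u).attach, flow G (bDist G s) z wf p.1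
              ≤ ∑ p ∈ (G.redParents u).attach, s p.1 :=
                Finset.sum_le_sum (fun p _ => ih p.1 (Or.inl (mem_redParents.1 p.2)))
            _ = ∑ p ∈ G.redParents u, s p := Finset.sum_attach _ _
            _ = s u := (hs.2 u h2).symm
        · exact Nat.zero_le _

lemma flow_agg_bounded (G : TFG V)
    (hT3a : ∀ p p' q, (p, q) ∈ G.A → G.Edge p' q → p' = p)
    (s : V → ℕ) (hs : GoodEq G s) (z : V) (hz : 1 ≤ s z)
    (wf : WellFounded (fun a b : V => G.Edge a b))
    {m : V} (hzm : z ∉ G.aggChildren m) (hne : (G.aggChildren m).Nonempty) :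
    flow G (bDist G s) z wf m = ∑ w ∈ G.aggChildren m, flow G (bDist G s) z wf w := by
  have hch : ∀ w ∈ G.aggChildren m,
      flow G (bDist G s) z wf w = bDist G s m (flow G (bDist G s) z wf m) w := by
    intro w hw
    exact flow_child G _ z wf hT3a (mem_aggChildren.1 hw) (fun h => hzm (h ▸ hw))
  rw [Finset.sum_congr rfl hch]
  rw [bDist_sum]
  have h1 : flow G (bDist G s) z wf m ≤ s m := flow_le_bounded G s hs z hz wf m
  rw [hs.1 m hne] at h1
  exact h1

lemma flow_agg_free (G : TFG V)
    (hT3a : ∀ p p' q, (p, q) ∈ G.A → G.Edge p' q → p' = p)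
    (z : V) (wf : WellFounded (fun a b : V => G.Edge a b))
    {m : V} (hzm : z ∉ G.aggChildren m) (hne : (G.aggChildren m).Nonempty) :
    flow G (fDist G) z wf m = ∑ w ∈ G.aggChildren m, flow G (fDist G) z wf w := by
  have hch : ∀ w ∈ G.aggChildren m,
      flow G (fDist G) z wf w = fDist G m (flow G (fDist G) z wf m) w := by
    intro w hw
    exact flow_child G _ z wf hT3a (mem_aggChildren.1 hw) (fun h => hzm (h ▸ hw))
  rw [Finset.sum_congr rfl hch, fDist_sum G m _ hne]

end TFGAux
end AuxDist
section AuxStep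

variable {V : Type} [DecidableEq V]

namespace TFGAux

lemma sum_sub_add (X : Finset V) (a b d : V → ℕ) (h : ∀ w ∈ X, a w ≤ b w) :
    ∑ w ∈ X, (b w - a w + d w) = ∑ w ∈ X, b w - ∑ w ∈ X, a w + ∑ w ∈ X, d w := by
  classical
  induction X using Finset.induction_on with
  | empty => simp
  | insert _ _ ha ih =>
    rename_i x X
    rw [Finset.sum_insert ha, Finset.sum_insert ha, Finset.sum_insert ha, Finset.sum_insert ha,
      ih (fun w hw => h w (Finset.mem_insert_of_mem hw))]
    have h1 : a x ≤ b x := h x (Finset.mem_insert_self _ _)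
    have h2 : ∑ w ∈ X, a w ≤ ∑ w ∈ X, b w :=
      Finset.sum_le_sum (fun w hw => h w (Finset.mem_insert_of_mem hw))
    omega

/-- One-step token propagation. -/
lemma step (G : TFG V)
    (hT3a : ∀ p p' q, (p, q) ∈ G.A → G.Edge p' q → p' = p)
    (hT3b : ∀ p q, ¬((p, q) ∈ G.R ∧ (p, q) ∈ G.A))
    (hT5 : ∀ v, ¬ Relation.TransGen G.Edge v v)
    {s : V → ℕ} (hs : GoodEq G s) {x y : V} (hxy : G.Edge x y) (hx : 1 ≤ s x) :
    ∃ s', GoodEq G s' ∧ 1 ≤ s' y ∧ ∀ u, ¬(G.Reach x u ∧ u ≠ x) → s' u = s u := by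
  rcases hxy with hR | hA
  · refine ⟨s, hs, ?_, fun u _ => rfl⟩
    have hvred : x ∈ G.redParents y := mem_redParents.2 hR
    rw [hs.2 y ⟨x, hvred⟩]
    calc 1 ≤ s x := hx
      _ ≤ ∑ w ∈ G.redParents y, s w :=
          Finset.single_le_sum (fun _ _ => Nat.zero_le _) hvred
  · have wf := edge_wf G hT5
    have hy : y ∈ G.aggChildren x := mem_aggChildren.2 hA
    have hne : (G.aggChildren x).Nonempty := ⟨y, hy⟩
    have hsum : 1 ≤ ∑ w ∈ G.aggChildren x, s w := by rw [← hs.1 x hne]; exact hx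
    have hzex : ∃ z ∈ G.aggChildren x, 1 ≤ s z := by
      by_contra hcon
      push_neg at hcon
      have h0 : ∑ w ∈ G.aggChildren x, s w = 0 :=
        Finset.sum_eq_zero (fun w hw => by have := hcon w hw; omega)
      omega
    obtain ⟨z, hzmem, hz1⟩ := hzex
    have hzA : (x, z) ∈ G.A := mem_aggChildren.1 hzmem
    set ez := flow G (bDist G s) z wf with hez
    set ey := flow G (fDist G) y wf with hey
    have hzred : G.redParents z = ∅ := redParents_eq_empty hT3a hT3b hzA
    have hyred : G.redParents y = ∅ := redParents_eq_empty hT3a hT3b hA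
    have hezle : ∀ u, ez u ≤ s u := flow_le_bounded G s hs z hz1 wf
    have hezsupp : ∀ u, ez u ≠ 0 → G.Reach z u := flow_supp G _ z wf (bDist0 G s)
    have heysupp : ∀ u, ey u ≠ 0 → G.Reach y u := flow_supp G _ y wf (fDist0 G)
    have hezx : ez x = 0 := by
      by_contra h; exact no_self_reach hT5 (Or.inr hzA) (hezsupp x h)
    have heyx : ey x = 0 := by
      by_contra h; exact no_self_reach hT5 (Or.inr hA) (heysupp x h)
    have hsib : ∀ (e : V → ℕ) (t : V), (x, t) ∈ G.A → (∀ u, e u ≠ 0 → G.Reach t u) →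
        ∀ w ∈ G.aggChildren x, w ≠ t → e w = 0 := by
      intro e t htA hsupp w hw hwt
      by_contra h
      have hr : G.Reach t w := hsupp w h
      rcases Relation.ReflTransGen.cases_tail hr with heq | ⟨p, hp1, hp2⟩
      · exact hwt heq
      · have hpx : p = x := hT3a x p w (mem_aggChildren.1 hw) hp2
        subst hpx
        exact no_self_reach hT5 (Or.inr htA) hp1
    have hezsum : ∑ w ∈ G.aggChildren x, ez w = 1 := by
      rw [Finset.sum_eq_single_of_mem z hzmem
        (fun w hw hwz => hsib ez z hzA hezsupp w hw hwz)]
      exact flow_z G _ z wf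
    have heysum : ∑ w ∈ G.aggChildren x, ey w = 1 := by
      rw [Finset.sum_eq_single_of_mem y hy
        (fun w hw hwy => hsib ey y hA heysupp w hw hwy)]
      exact flow_z G _ y wf
    refine ⟨fun u => s u - ez u + ey u, ⟨?_, ?_⟩, ?_, ?_⟩
    · -- agg equations
      intro m hne'
      show s m - ez m + ey m = ∑ w ∈ G.aggChildren m, (s w - ez w + ey w)
      by_cases hzm : z ∈ G.aggChildren m
      · have hmx : m = x := agg_parent_unique hT3a hzA (mem_aggChildren.1 hzm)
        subst hmx
        rw [sum_sub_add _ _ _ _ (fun w _ => hezle w), hezsum, heysum,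
          ← hs.1 m hne', hezx, heyx]
        omega
      · have hym : y ∉ G.aggChildren m := by
          intro hym
          have hmx : m = x := agg_parent_unique hT3a hA (mem_aggChildren.1 hym)
          exact hzm (hmx ▸ hzmem)
        rw [sum_sub_add _ _ _ _ (fun w _ => hezle w), ← hs.1 m hne',
          ← flow_agg_bounded G hT3a s hs z hz1 wf hzm hne',
          ← flow_agg_free G hT3a y wf hym hne']
    · -- red equations
      intro m hne'
      show s m - ez m + ey m = ∑ w ∈ G.redParents m, (s w - ez w + ey w)
      rw [sum_sub_add _ _ _ _ (fun w _ => hezle w), ← hs.2 m hne',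
        ← flow_red G _ z wf hT3a hT3b hzred hne',
        ← flow_red G _ y wf hT3a hT3b hyred hne']
    · -- token at y
      show 1 ≤ s y - ez y + ey y
      have h1 : ey y = 1 := flow_z G _ y wf
      have h2 : ez y ≤ s y := hezle y
      omega
    · -- frame
      intro u hu
      have hez0 : ez u = 0 := by
        by_contra h
        have hr : G.Reach z u := hezsupp u h
        have hux : u ≠ x := by rintro rfl; rw [hezx] at h; exact h rfl
        exact hu ⟨Relation.ReflTransGen.head (Or.inr hzA) hr, hux⟩
      have hey0 : ey u = 0 := by
        by_contra h
        have hr : G.Reach y u := heysupp u h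
        have hux : u ≠ x := by rintro rfl; rw [heyx] at h; exact h rfl
        exact hu ⟨Relation.ReflTransGen.head (Or.inr hA) hr, hux⟩
      show s u - ez u + ey u = s u
      rw [hez0, hey0]
      omega

/-- Path propagation: a token at `x` can be pushed to any successor `y`,
changing only strict successors of `x`. -/
lemma propagate (G : TFG V)
    (hT3a : ∀ p p' q, (p, q) ∈ G.A → G.Edge p' q → p' = p)
    (hT3b : ∀ p q, ¬((p, q) ∈ G.R ∧ (p, q) ∈ G.A))
    (hT5 : ∀ v, ¬ Relation.TransGen G.Edge v v)
    {x y : V} (hreach : G.Reach x y) :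
    ∀ s : V → ℕ, GoodEq G s → 1 ≤ s x →
      ∃ s', GoodEq G s' ∧ 1 ≤ s' y ∧ ∀ u, ¬(G.Reach x u ∧ u ≠ x) → s' u = s u := by
  induction hreach using Relation.ReflTransGen.head_induction_on with
  | refl =>
    intro s hs hx
    exact ⟨s, hs, hx, fun u _ => rfl⟩
  | head hab hby ih =>
    rename_i a b
    intro s hs ha
    obtain ⟨s1, hs1, hb1, hframe1⟩ := step G hT3a hT3b hT5 hs hab ha
    obtain ⟨s2, hs2, hy2, hframe2⟩ := ih s1 hs1 hb1
    refine ⟨s2, hs2, hy2, ?_⟩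
    intro u hu
    have h2 : s2 u = s1 u := by
      apply hframe2
      rintro ⟨hbu, hub⟩
      have hau : G.Reach a u := Relation.ReflTransGen.head hab hbu
      have hua : u ≠ a := by
        rintro rfl
        exact no_self_reach hT5 hab hbu
      exact hu ⟨hau, hua⟩
    rw [h2]
    exact hframe1 u hu

end TFGAux
end AuxStep
theorem concurrency_redundancy_nodes {V : Type} [DecidableEq V] (G : TFG V) (E : EqSys V)
    (P1 P2 : Set V) [DecidablePred (· ∈ P1)] [DecidablePred (· ∈ P2)]
    (N1 : PetriNet ↥P1) (m1 : ↥P1 → ℕ) (N2 : PetriNet ↥P2) (m2 : ↥P2 → ℕ)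
    (hwf : WellFormed G E P1 P2) (heq : EEquiv E P1 P2 N1 m1 N2 m2)
    (hsafe1 : N1.Safe m1) (hsafe2 : N2.Safe m2)
    (v w : V) (hv : NodeConc G P2 N2 m2 v v) (hvw : (v, w) ∈ G.R) :
    ∀ v' ∈ G.succs v \ G.succs w, ∀ w' ∈ G.succs w, NodeConc G P2 N2 m2 v' w' := by
  classical
  intro v' hv' w' hw'
  rw [Set.mem_diff] at hv'
  obtain ⟨hvv', hwv'⟩ := hv'
  have hvv'r : G.Reach v v' := hvv'
  have hww'r : G.Reach w w' := hw'
  obtain ⟨c, hconf, htot, hwd, hreach, hv0, -⟩ := hv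
  set s : V → ℕ := cval c with hsdef
  have hcs : ∀ u, c u = some (s u) := by
    intro u
    cases hcu : c u with
    | none => exact absurd hcu (htot u)
    | some n => simp [hsdef, cval, hcu]
  have hs : TFGAux.GoodEq G s := by
    constructor
    · intro m hne; exact (hwd.2 m (s m) (hcs m)).1 hne
    · intro m hne; exact (hwd.2 m (s m) (hcs m)).2 hne
  obtain ⟨s1, hs1, h1v', hframe1⟩ :=
    TFGAux.propagate G hwf.T3a hwf.T3b hwf.T5 hvv'r s hs hv0
  have h1v : s1 v = s v := hframe1 v (by rintro ⟨-, h⟩; exact h rfl)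
  have h1w : 1 ≤ s1 w := by
    have hmem : v ∈ G.redParents w := TFGAux.mem_redParents.2 hvw
    rw [hs1.2 w ⟨v, hmem⟩]
    calc 1 ≤ s1 v := by rw [h1v]; exact hv0
      _ ≤ ∑ p ∈ G.redParents w, s1 p :=
          Finset.single_le_sum (fun _ _ => Nat.zero_le _) hmem
  obtain ⟨s2, hs2, h2w', hframe2⟩ :=
    TFGAux.propagate G hwf.T3a hwf.T3b hwf.T5 hww'r s1 hs1 h1w
  have h2v' : 1 ≤ s2 v' := by
    rw [hframe2 v' (by rintro ⟨hr, -⟩; exact hwv' hr)]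
    exact h1v'
  have hroot_frame : ∀ u, G.IsRoot u → s2 u = s u := by
    intro u hu
    have hnr : ∀ t : V, ¬(G.Reach t u ∧ u ≠ t) := by
      rintro t ⟨hr, hne⟩
      rcases Relation.ReflTransGen.cases_tail hr with heq | ⟨p, -, hp2⟩
      · exact hne heq
      · exact hu p hp2
    rw [hframe2 u (hnr w), hframe1 u (hnr v)]
  refine ⟨fun u => some (s2 u), ?_, ?_, ⟨?_, ?_⟩, ?_, ?_, ?_⟩
  · -- IsConfig
    intro u n hn
    have hroot : G.IsRoot u := hwf.T2 u (by rw [hn]; exact Option.some_ne_none n)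
    have hcn := hconf u n hn
    rw [hcs u] at hcn
    have hsu : s u = n := Option.some.inj hcn
    show some (s2 u) = some n
    rw [hroot_frame u hroot, hsu]
  · -- TotalConf
    intro u; simp
  · -- WellDef, definedness clause
    intro a b _; simp
  · -- WellDef, equations clause
    intro m n hmn
    have hn : n = s2 m := (Option.some.inj hmn).symm
    subst hn
    refine ⟨fun hne => ?_, fun hne => ?_⟩
    · simpa [cval] using hs2.1 m hne
    · simpa [cval] using hs2.2 m hne
  · -- reachability of the restriction
    have hre : restrict (fun u => some (s2 u)) P2 = restrict c P2 := by
      funext p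
      have hp2 : (p : V) ∈ P2 := p.2
      have hkn : G.kval (p : V) = none := by
        have hmem : (p : V) ∈ {v | G.kval v = none} := by
          rw [hwf.T1]; exact Or.inl (Or.inr hp2)
        exact hmem
      have hroot : G.IsRoot (p : V) := (hwf.T6root _ hkn).2 hp2
      show cval (fun u => some (s2 u)) ↑p = cval c ↑p
      simp only [cval, hcs (↑p : V), Option.getD_some]
      exact hroot_frame _ hroot
    rw [hre]
    exact hreach
  · simpa [cval] using Nat.lt_of_lt_of_le Nat.zero_lt_one h2v'
  · simpa [cval] using Nat.lt_of_lt_of_le Nat.zero_lt_one h2w'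
end

section
/- Let G(E) be a well-formed TFG for (N1,m1) ▷_E (N2,m2), with both nets safe, and C its node concurrency relation. If v C w with v ∉ succ(w) and w ∉ succ(v), then one of the following holds: (Redundancy) there exists a nondead node v0 and a redundancy arc v0 →• w0 such that (v,w) or (w,v) lies in (succ(v0) \ succ(w0)) × succ(w0); or (Distinct) there exist two distinct roots v0, w0 with v0 C w0, v ∈ succ(v0) and w ∈ succ(w0). -/
open Finset

variable {V : Type} [DecidableEq V]

section AuxCPP

lemma mem_agg {G : TFG V} {u y : V} : y ∈ G.aggChildren u ↔ (u, y) ∈ G.A := by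
  constructor
  · intro h
    simp only [TFG.aggChildren, Finset.mem_image, Finset.mem_filter] at h
    obtain ⟨⟨e1, e2⟩, ⟨he, h1⟩, h2⟩ := h
    simp only at h1 h2
    subst h1; subst h2; exact he
  · intro h
    simp only [TFG.aggChildren, Finset.mem_image, Finset.mem_filter]
    exact ⟨(u, y), ⟨h, rfl⟩, rfl⟩

lemma mem_red {G : TFG V} {u x : V} : x ∈ G.redParents u ↔ (x, u) ∈ G.R := by
  constructor
  · intro h
    simp only [TFG.redParents, Finset.mem_image, Finset.mem_filter] at h
    obtain ⟨⟨e1, e2⟩, ⟨he, h1⟩, h2⟩ := h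
    simp only at h1 h2
    subst h1; subst h2; exact he
  · intro h
    simp only [TFG.redParents, Finset.mem_image, Finset.mem_filter]
    exact ⟨(x, u), ⟨h, rfl⟩, rfl⟩

noncomputable def supp (G : TFG V) : Finset V :=
  ((G.R ∪ G.A).image Prod.fst) ∪ ((G.R ∪ G.A).image Prod.snd)

lemma mem_supp_of_edge {G : TFG V} {x y : V} (h : G.Edge x y) : x ∈ supp G ∧ y ∈ supp G := by
  have hxy : (x, y) ∈ G.R ∪ G.A := by
    cases h with
    | inl h => exact Finset.mem_union_left _ h
    | inr h => exact Finset.mem_union_right _ h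
  exact ⟨Finset.mem_union_left _ (Finset.mem_image_of_mem _ hxy),
    Finset.mem_union_right _ (Finset.mem_image_of_mem _ hxy)⟩

open Classical in
noncomputable def ancC (G : TFG V) (u : V) : ℕ :=
  ((supp G).filter (fun x => Relation.TransGen G.Edge x u)).card

open Classical in
noncomputable def descC (G : TFG V) (u : V) : ℕ :=
  ((supp G).filter (fun x => Relation.TransGen G.Edge u x)).card

lemma ancC_lt {G : TFG V} (hac : ∀ x, ¬ Relation.TransGen G.Edge x x)
    {p u : V} (h : G.Edge p u) : ancC G p < ancC G u := by
  classical
  apply Finset.card_lt_card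
  rw [Finset.ssubset_def]
  constructor
  · intro x hx
    simp only [Finset.mem_filter] at hx ⊢
    exact ⟨hx.1, hx.2.tail h⟩
  · intro hsub
    have hp : p ∈ (supp G).filter (fun x => Relation.TransGen G.Edge x u) :=
      Finset.mem_filter.mpr ⟨(mem_supp_of_edge h).1, Relation.TransGen.single h⟩
    have := hsub hp
    exact hac p (Finset.mem_filter.mp this).2

lemma descC_lt {G : TFG V} (hac : ∀ x, ¬ Relation.TransGen G.Edge x x)
    {u a : V} (h : G.Edge u a) : descC G a < descC G u := by
  classical
  apply Finset.card_lt_card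
  rw [Finset.ssubset_def]
  constructor
  · intro x hx
    simp only [Finset.mem_filter] at hx ⊢
    exact ⟨hx.1, hx.2.head h⟩
  · intro hsub
    have ha : a ∈ (supp G).filter (fun x => Relation.TransGen G.Edge u x) :=
      Finset.mem_filter.mpr ⟨(mem_supp_of_edge h).2, Relation.TransGen.single h⟩
    have := hsub ha
    exact hac a (Finset.mem_filter.mp this).2

open Classical in
noncomputable def surg (G : TFG V) (hac : ∀ x, ¬ Relation.TransGen G.Edge x x)
    (val : V → ℕ) (ch : V → V) (z : V) (u : V) : ℕ :=
  if Relation.TransGen G.Edge z u then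
    if hR : (G.redParents u).Nonempty then
      ∑ p ∈ (G.redParents u).attach, surg G hac val ch z p.1
    else if hA : ∃ q, (q, u) ∈ G.A then
      if u = ch (Classical.choose hA) then surg G hac val ch z (Classical.choose hA) else 0
    else val u
  else val u
termination_by ancC G u
decreasing_by
  · exact ancC_lt hac (Or.inl (mem_red.mp p.2))
  · exact ancC_lt hac (Or.inr (Classical.choose_spec hA))

lemma surg_notin {G : TFG V} {hac : ∀ x, ¬ Relation.TransGen G.Edge x x}
    {val : V → ℕ} {ch : V → V} {z u : V} (h : ¬ Relation.TransGen G.Edge z u) :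
    surg G hac val ch z u = val u := by
  rw [surg]; simp [h]

lemma surg_red {G : TFG V} {hac : ∀ x, ¬ Relation.TransGen G.Edge x x}
    {val : V → ℕ} {ch : V → V} {z u : V} (h : Relation.TransGen G.Edge z u)
    (hR : (G.redParents u).Nonempty) :
    surg G hac val ch z u = ∑ p ∈ G.redParents u, surg G hac val ch z p := by
  rw [surg]
  rw [if_pos h, dif_pos hR]
  exact Finset.sum_attach _ _

lemma red_empty_of_agg {G : TFG V}
    (h3a : ∀ p p' q, (p, q) ∈ G.A → G.Edge p' q → p' = p)
    (h3b : ∀ p q, ¬((p, q) ∈ G.R ∧ (p, q) ∈ G.A))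
    {q u : V} (hA : (q, u) ∈ G.A) : G.redParents u = ∅ := by
  apply Finset.eq_empty_iff_forall_notMem.mpr
  intro x hx
  have hR : (x, u) ∈ G.R := mem_red.mp hx
  have hxq : x = q := h3a q x u hA (Or.inl hR)
  subst hxq
  exact h3b x u ⟨hR, hA⟩

lemma surg_agg {G : TFG V} {hac : ∀ x, ¬ Relation.TransGen G.Edge x x}
    (h3a : ∀ p p' q, (p, q) ∈ G.A → G.Edge p' q → p' = p)
    (h3b : ∀ p q, ¬((p, q) ∈ G.R ∧ (p, q) ∈ G.A))
    {val : V → ℕ} {ch : V → V} {z u q : V} (h : Relation.TransGen G.Edge z u)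
    (hq : (q, u) ∈ G.A) :
    surg G hac val ch z u = if u = ch q then surg G hac val ch z q else 0 := by
  have hRe : G.redParents u = ∅ := red_empty_of_agg h3a h3b hq
  have hR : ¬ (G.redParents u).Nonempty := by simp [hRe]
  have hA : ∃ q', (q', u) ∈ G.A := ⟨q, hq⟩
  have hcq : Classical.choose hA = q :=
    h3a q (Classical.choose hA) u hq (Or.inr (Classical.choose_spec hA))
  rw [surg, if_pos h, dif_neg hR, dif_pos hA, hcq]

lemma val_agg {G : TFG V} {c : V → Option ℕ} (htot : TotalConf c) (hwd : G.WellDef c)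
    {u : V} (h : (G.aggChildren u).Nonempty) :
    cval c u = ∑ y ∈ G.aggChildren u, cval c y := by
  obtain ⟨n, hn⟩ := Option.ne_none_iff_exists'.mp (htot u)
  have h2 := (hwd.2 u n hn).1 h
  simp only [cval, hn, Option.getD_some]
  exact h2

lemma val_red {G : TFG V} {c : V → Option ℕ} (htot : TotalConf c) (hwd : G.WellDef c)
    {u : V} (h : (G.redParents u).Nonempty) :
    cval c u = ∑ y ∈ G.redParents u, cval c y := by
  obtain ⟨n, hn⟩ := Option.ne_none_iff_exists'.mp (htot u)
  have h2 := (hwd.2 u n hn).2 h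
  simp only [cval, hn, Option.getD_some]
  exact h2

lemma kval_none_of_edge {G : TFG V} {E : EqSys V} {P1 P2 : Set V}
    (hwf : WellFormed G E P1 P2) {x u : V} (h : G.Edge x u) : G.kval u = none := by
  by_contra hk
  exact hwf.T2 u hk x h

lemma kval_none_of_agg_nonempty {G : TFG V} {E : EqSys V} {P1 P2 : Set V}
    (hwf : WellFormed G E P1 P2) {u : V} (h : (G.aggChildren u).Nonempty) :
    G.kval u = none := by
  have hE : (u, G.aggChildren u) ∈ E := (hwf.T4 u _).mp ⟨Or.inl rfl, h⟩
  have hf : u ∈ fvars E := ⟨(u, G.aggChildren u), hE, Or.inl rfl⟩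
  have : u ∈ {v | G.kval v = none} := by
    rw [hwf.T1]; exact Or.inr hf
  exact this

lemma kval_none_of_memP2 {G : TFG V} {E : EqSys V} {P1 P2 : Set V}
    (hwf : WellFormed G E P1 P2) {p : V} (hp : p ∈ P2) : G.kval p = none := by
  have : p ∈ {v | G.kval v = none} := by
    rw [hwf.T1]; exact Or.inl (Or.inr hp)
  exact this

lemma root_of_memP2 {G : TFG V} {E : EqSys V} {P1 P2 : Set V}
    (hwf : WellFormed G E P1 P2) {p : V} (hp : p ∈ P2) : G.IsRoot p :=
  (hwf.T6root p (kval_none_of_memP2 hwf hp)).mpr hp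

lemma notTrans_of_root {G : TFG V} {p z : V} (hroot : G.IsRoot p) :
    ¬ Relation.TransGen G.Edge z p := by
  intro h
  obtain ⟨b, _, hb⟩ := Relation.TransGen.tail'_iff.mp h
  exact hroot b hb

open Classical in
noncomputable def chTo (G : TFG V) (x : V) (p : V) : V :=
  if h : ∃ y, y ∈ G.aggChildren p ∧ G.Reach y x then Classical.choose h
  else if h2 : (G.aggChildren p).Nonempty then Classical.choose h2
  else p

lemma chTo_mem {G : TFG V} {x p : V} (h : (G.aggChildren p).Nonempty) :
    chTo G x p ∈ G.aggChildren p := by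
  unfold chTo
  split_ifs with h1
  · exact (Classical.choose_spec h1).1
  · exact Classical.choose_spec h

lemma chTo_reach {G : TFG V} {x p : V} (h : ∃ y, y ∈ G.aggChildren p ∧ G.Reach y x) :
    G.Reach (chTo G x p) x := by
  unfold chTo
  rw [dif_pos h]
  exact (Classical.choose_spec h).2

lemma transGen_of_DU {G : TFG V} {z u y : V} (hu : Relation.TransGen G.Edge z u ∨ u = z)
    (h : G.Edge u y) : Relation.TransGen G.Edge z y := by
  cases hu with
  | inl hu => exact hu.tail h
  | inr hu => subst hu; exact Relation.TransGen.single h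

lemma surg_solves {G : TFG V} {E : EqSys V} {P1 P2 : Set V}
    (hwf : WellFormed G E P1 P2) {c : V → Option ℕ} (htot : TotalConf c) (hwd : G.WellDef c)
    {ch : V → V} (hch : ∀ u, (G.aggChildren u).Nonempty → ch u ∈ G.aggChildren u) (z : V) :
    Solves E (surg G hwf.T5 (cval c) ch z) := by
  set s' := surg G hwf.T5 (cval c) ch z with hs'
  rintro ⟨n, X⟩ he
  obtain ⟨hX | hX, hne⟩ := (hwf.T4 n X).mpr he
  · -- X = aggChildren n
    subst hX
    simp only
    by_cases hD : Relation.TransGen G.Edge z n ∨ n = z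
    · have hval : ∀ y ∈ G.aggChildren n, s' y = if y = ch n then s' n else 0 := by
        intro y hy
        have hA : (n, y) ∈ G.A := mem_agg.mp hy
        exact surg_agg hwf.T3a hwf.T3b (transGen_of_DU hD (Or.inr hA)) hA
      rw [Finset.sum_congr rfl hval, Finset.sum_ite_eq' (G.aggChildren n) (ch n)
        (fun _ => s' n), if_pos (hch n hne)]
    · push_neg at hD
      have hn' : ∀ y ∈ G.aggChildren n, ¬ Relation.TransGen G.Edge z y := by
        intro y hy hty
        obtain ⟨b, hzb, hby⟩ := Relation.TransGen.tail'_iff.mp hty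
        have hbn : b = n := hwf.T3a n b y (mem_agg.mp hy) hby
        subst hbn
        rcases hzb.cases_tail with h | ⟨d, hzd, hdb⟩
        · exact hD.2 h
        · exact hD.1 (Relation.TransGen.tail' hzd hdb)
      have h1 : s' n = cval c n := surg_notin hD.1
      have h2 : ∀ y ∈ G.aggChildren n, s' y = cval c y := fun y hy => surg_notin (hn' y hy)
      rw [h1, Finset.sum_congr rfl h2]
      exact val_agg htot hwd hne
  · -- X = redParents n
    subst hX
    simp only
    by_cases hD : Relation.TransGen G.Edge z n
    · exact surg_red hD hne
    · have h1 : s' n = cval c n := surg_notin hD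
      have h2 : ∀ p ∈ G.redParents n, s' p = cval c p := by
        intro p hp
        refine surg_notin (fun hzp => hD ?_)
        exact hzp.tail (Or.inl (mem_red.mp hp))
      rw [h1, Finset.sum_congr rfl h2]
      exact val_red htot hwd hne

lemma P1_bound {E : EqSys V} {P1 P2 : Set V}
    [DecidablePred (· ∈ P1)] [DecidablePred (· ∈ P2)]
    {N1 : PetriNet ↥P1} {m1 : ↥P1 → ℕ} {N2 : PetriNet ↥P2} {m2 : ↥P2 → ℕ}
    (heq : EEquiv E P1 P2 N1 m1 N2 m2) (hsafe1 : N1.Safe m1)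
    {c : V → Option ℕ} (hreach : N2.reach m2 (restrict c P2))
    {s' : V → ℕ} (hs : Solves E s') (hP2 : ∀ p : ↥P2, s' ↑p = cval c ↑p)
    {l : V} (hl : l ∈ P1) : s' l ≤ 1 := by
  have h := heq.A3 (fun p => s' ↑p) (restrict c P2)
    ⟨s', hs, fun p => rfl, fun p => hP2 p⟩
  have h1 : N1.reach m1 (fun p => s' ↑p) := h.mpr hreach
  exact hsafe1 _ h1 ⟨l, hl⟩

lemma surg_agrees_P2 {G : TFG V} {E : EqSys V} {P1 P2 : Set V}
    (hwf : WellFormed G E P1 P2) {c : V → Option ℕ}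
    {ch : V → V} {z : V} (p : ↥P2) :
    surg G hwf.T5 (cval c) ch z ↑p = cval c ↑p :=
  surg_notin (notTrans_of_root (root_of_memP2 hwf p.2))

lemma surg_push {G : TFG V} {E : EqSys V} {P1 P2 : Set V}
    (hwf : WellFormed G E P1 P2) {c : V → Option ℕ} (htot : TotalConf c) (hwd : G.WellDef c)
    {z x : V} (hzx : G.Reach z x) (hz1 : 0 < cval c z) :
    1 ≤ surg G hwf.T5 (cval c) (chTo G x) z x := by
  set ch := chTo G x with hch
  set s' := surg G hwf.T5 (cval c) ch z with hs'
  suffices H : ∀ n, ∀ u, descC G u < n → (Relation.TransGen G.Edge z u ∨ u = z) →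
      G.Reach u x → 1 ≤ s' u → 1 ≤ s' x by
    have hz : s' z = cval c z := surg_notin (hwf.T5 z)
    exact H (descC G z + 1) z (by omega) (Or.inr rfl) hzx (by omega)
  intro n
  induction n with
  | zero => intro u h; omega
  | succ n ih =>
    intro u hlt hu hux hs1
    by_cases hue : u = x
    · subst hue; exact hs1
    by_cases hY : ∃ y, y ∈ G.aggChildren u ∧ G.Reach y x
    · have hne : (G.aggChildren u).Nonempty := ⟨Classical.choose hY, (Classical.choose_spec hY).1⟩
      have hymem : ch u ∈ G.aggChildren u := chTo_mem hne
      have hyA : (u, ch u) ∈ G.A := mem_agg.mp hymem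
      have hyD : Relation.TransGen G.Edge z (ch u) := transGen_of_DU hu (Or.inr hyA)
      have hval : s' (ch u) = s' u := by
        rw [hs', surg_agg hwf.T3a hwf.T3b hyD hyA, if_pos rfl]
      have hdesc : descC G (ch u) < descC G u := descC_lt hwf.T5 (Or.inr hyA)
      exact ih (ch u) (by omega) (Or.inl hyD) (chTo_reach hY) (by omega)
    · obtain ⟨e, hue', hex⟩ := (Relation.ReflTransGen.cases_head hux).resolve_left hue
      have heR : (u, e) ∈ G.R := by
        rcases hue' with h | h
        · exact h
        · exact absurd ⟨e, mem_agg.mpr h, hex⟩ hY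
      have heD : Relation.TransGen G.Edge z e := transGen_of_DU hu hue'
      have hne : (G.redParents e).Nonempty := ⟨u, mem_red.mpr heR⟩
      have hsum : s' e = ∑ p ∈ G.redParents e, s' p := surg_red heD hne
      have hle : s' u ≤ ∑ p ∈ G.redParents e, s' p :=
        Finset.single_le_sum (fun i _ => Nat.zero_le _) (mem_red.mpr heR)
      have hdesc : descC G e < descC G u := descC_lt hwf.T5 hue'
      exact ih e (by omega) (Or.inl heD) hex (by omega)

lemma surg_desc {G : TFG V} {E : EqSys V} {P1 P2 : Set V}
    (hwf : WellFormed G E P1 P2) {c : V → Option ℕ}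
    {ch : V → V} (hch : ∀ u, (G.aggChildren u).Nonempty → ch u ∈ G.aggChildren u)
    {z : V} (hkz : G.kval z = none) :
    ∀ u, (Relation.TransGen G.Edge z u ∨ u = z) →
      ∃ l, l ∈ P1 ∧ surg G hwf.T5 (cval c) ch z u ≤ surg G hwf.T5 (cval c) ch z l := by
  set s' := surg G hwf.T5 (cval c) ch z with hs'
  suffices H : ∀ n, ∀ u, descC G u < n → (Relation.TransGen G.Edge z u ∨ u = z) →
      ∃ l, l ∈ P1 ∧ s' u ≤ s' l by
    exact fun u hu => H (descC G u + 1) u (by omega) hu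
  intro n
  induction n with
  | zero => intro u h; omega
  | succ n ih =>
    intro u hlt hu
    by_cases hne : (G.aggChildren u).Nonempty
    · have hymem : ch u ∈ G.aggChildren u := hch u hne
      have hyA : (u, ch u) ∈ G.A := mem_agg.mp hymem
      have hyD : Relation.TransGen G.Edge z (ch u) := transGen_of_DU hu (Or.inr hyA)
      have hval : s' (ch u) = s' u := by
        rw [hs', surg_agg hwf.T3a hwf.T3b hyD hyA, if_pos rfl]
      have hdesc : descC G (ch u) < descC G u := descC_lt hwf.T5 (Or.inr hyA)
      obtain ⟨l, hl, hle⟩ := ih (ch u) (by omega) (Or.inl hyD)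
      exact ⟨l, hl, by omega⟩
    · -- u is a circ-leaf
      have hku : G.kval u = none := by
        cases hu with
        | inl hu =>
          obtain ⟨b, _, hb⟩ := Relation.TransGen.tail'_iff.mp hu
          exact kval_none_of_edge hwf hb
        | inr hu => subst hu; exact hkz
      have hleaf : G.IsCircLeaf u := by
        intro y hy
        exact hne ⟨y, mem_agg.mpr hy⟩
      exact ⟨u, (hwf.T6leaf u hku).mp hleaf, le_refl _⟩

lemma val_le_one {G : TFG V} {E : EqSys V} {P1 P2 : Set V}
    [DecidablePred (· ∈ P1)] [DecidablePred (· ∈ P2)]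
    {N1 : PetriNet ↥P1} {m1 : ↥P1 → ℕ} {N2 : PetriNet ↥P2} {m2 : ↥P2 → ℕ}
    (hwf : WellFormed G E P1 P2) (heq : EEquiv E P1 P2 N1 m1 N2 m2) (hsafe1 : N1.Safe m1)
    {c : V → Option ℕ} (htot : TotalConf c) (hwd : G.WellDef c)
    (hreach : N2.reach m2 (restrict c P2))
    {t : V} (hkt : G.kval t = none) : cval c t ≤ 1 := by
  by_contra hcon
  push_neg at hcon
  set ch := chTo G t with hch
  have hchv : ∀ u, (G.aggChildren u).Nonempty → ch u ∈ G.aggChildren u :=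
    fun u hu => chTo_mem hu
  set s' := surg G hwf.T5 (cval c) ch t with hs'
  obtain ⟨l, hl, hle0⟩ := surg_desc (c := c) hwf hchv hkt t (Or.inr rfl)
  have hle : s' t ≤ s' l := hle0
  have hst : s' t = cval c t := surg_notin (hwf.T5 t)
  have hb : s' l ≤ 1 :=
    P1_bound heq hsafe1 hreach (surg_solves hwf htot hwd hchv t)
      (fun p => surg_agrees_P2 hwf p) hl
  omega

def ChainRel (G : TFG V) (c : V → Option ℕ) (a b : V) : Prop :=
  G.Edge b a ∧ 0 < cval c a ∧ 0 < cval c b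

lemma reach_of_chain {G : TFG V} {c : V → Option ℕ} {t r : V}
    (h : Relation.ReflTransGen (ChainRel G c) t r) : G.Reach r t := by
  induction h with
  | refl => exact Relation.ReflTransGen.refl
  | tail h1 h2 ih => exact Relation.ReflTransGen.head h2.1 ih

lemma chain_of_reach {G : TFG V} {E : EqSys V} {P1 P2 : Set V}
    [DecidablePred (· ∈ P1)] [DecidablePred (· ∈ P2)]
    {N1 : PetriNet ↥P1} {m1 : ↥P1 → ℕ} {N2 : PetriNet ↥P2} {m2 : ↥P2 → ℕ}
    (hwf : WellFormed G E P1 P2) (heq : EEquiv E P1 P2 N1 m1 N2 m2) (hsafe1 : N1.Safe m1)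
    {c : V → Option ℕ} (htot : TotalConf c) (hwd : G.WellDef c)
    (hreach : N2.reach m2 (restrict c P2))
    {z : V} (hz : 0 < cval c z) (hkz : G.kval z = none) :
    ∀ t, 0 < cval c t → G.Reach z t → Relation.ReflTransGen (ChainRel G c) t z := by
  suffices H : ∀ n, ∀ t, ancC G t < n → 0 < cval c t → G.Reach z t →
      Relation.ReflTransGen (ChainRel G c) t z by
    exact fun t h1 h2 => H (ancC G t + 1) t (by omega) h1 h2
  intro n
  induction n with
  | zero => intro t h; omega
  | succ n ih =>
    intro t hlt hpos hre
    rcases Relation.ReflTransGen.cases_tail hre with rfl | ⟨x, hzx, hxt⟩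
    · exact Relation.ReflTransGen.refl
    by_cases hA : ∃ q, (q, t) ∈ G.A
    · obtain ⟨q, hq⟩ := hA
      have hx : x = q := hwf.T3a q x t hq hxt
      subst hx
      have hreachq : G.Reach z x := hzx
      have hsum := val_agg htot hwd (⟨t, mem_agg.mpr hq⟩ : (G.aggChildren x).Nonempty)
      have hle : cval c t ≤ ∑ y ∈ G.aggChildren x, cval c y :=
        Finset.single_le_sum (fun i _ => Nat.zero_le _) (mem_agg.mpr hq)
      have hposq : 0 < cval c x := by omega
      have hanc : ancC G x < ancC G t := ancC_lt hwf.T5 (Or.inr hq)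
      exact Relation.ReflTransGen.head ⟨Or.inr hq, hpos, hposq⟩
        (ih x (by omega) hposq hreachq)
    · have hxtR : (x, t) ∈ G.R := by
        rcases hxt with h | h
        · exact h
        · exact absurd ⟨x, h⟩ hA
      have hxmem : x ∈ G.redParents t := mem_red.mpr hxtR
      have hne : (G.redParents t).Nonempty := ⟨x, hxmem⟩
      have hkt : G.kval t = none := kval_none_of_edge hwf hxt
      have hbt : cval c t ≤ 1 := val_le_one hwf heq hsafe1 htot hwd hreach hkt
      have ht1 : cval c t = 1 := by omega
      have hsum := val_red htot hwd hne
      obtain ⟨p, hp, hppos⟩ : ∃ p ∈ G.redParents t, 0 < cval c p := by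
        by_contra hcon
        push_neg at hcon
        have hzero : ∑ y ∈ G.redParents t, cval c y = 0 :=
          Finset.sum_eq_zero (fun q' hq' => by have := hcon q' hq'; omega)
        omega
      by_cases hzp : G.Reach z p
      · have hedge : G.Edge p t := Or.inl (mem_red.mp hp)
        have hanc : ancC G p < ancC G t := ancC_lt hwf.T5 hedge
        exact Relation.ReflTransGen.head ⟨hedge, hpos, hppos⟩
          (ih p (by omega) hppos hzp)
      · exfalso
        have hxp : x ≠ p := fun h => hzp (h ▸ hzx)
        set ch := chTo G x with hchd
        have hchv : ∀ u, (G.aggChildren u).Nonempty → ch u ∈ G.aggChildren u :=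
          fun u hu => chTo_mem hu
        set s' := surg G hwf.T5 (cval c) ch z with hs'
        have hs'x : 1 ≤ s' x := surg_push hwf htot hwd hzx hz
        have hs'p : s' p = cval c p := surg_notin (fun h => hzp h.to_reflTransGen)
        have htD : Relation.TransGen G.Edge z t := Relation.TransGen.tail' hzx hxt
        have hs't : s' t = ∑ q' ∈ G.redParents t, s' q' := surg_red htD hne
        have e1 : s' x + ∑ y ∈ (G.redParents t).erase x, s' y
            = ∑ y ∈ G.redParents t, s' y := Finset.add_sum_erase _ s' hxmem
        have e2 : s' p ≤ ∑ y ∈ (G.redParents t).erase x, s' y :=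
          Finset.single_le_sum (fun i _ => Nat.zero_le _)
            (Finset.mem_erase.mpr ⟨Ne.symm hxp, hp⟩)
        obtain ⟨l, hl, hle0⟩ := surg_desc (c := c) hwf hchv hkz t (Or.inl htD)
        have hle : s' t ≤ s' l := hle0
        have hb : s' l ≤ 1 :=
          P1_bound heq hsafe1 hreach (surg_solves hwf htot hwd hchv z)
            (fun p' => surg_agrees_P2 hwf p') hl
        omega

lemma climb_root {G : TFG V} {E : EqSys V} {P1 P2 : Set V}
    (hwf : WellFormed G E P1 P2)
    {c : V → Option ℕ} (htot : TotalConf c) (hwd : G.WellDef c) :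
    ∀ t, 0 < cval c t →
      ∃ r, 0 < cval c r ∧ G.IsRoot r ∧ Relation.ReflTransGen (ChainRel G c) t r := by
  suffices H : ∀ n, ∀ t, ancC G t < n → 0 < cval c t →
      ∃ r, 0 < cval c r ∧ G.IsRoot r ∧ Relation.ReflTransGen (ChainRel G c) t r by
    exact fun t h1 => H (ancC G t + 1) t (by omega) h1
  intro n
  induction n with
  | zero => intro t h; omega
  | succ n ih =>
    intro t hlt hpos
    by_cases hr : G.IsRoot t
    · exact ⟨t, hpos, hr, Relation.ReflTransGen.refl⟩
    · have hq : ∃ q, G.Edge q t := by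
        unfold TFG.IsRoot at hr
        push_neg at hr
        exact hr
      obtain ⟨q, hq⟩ := hq
      rcases hq with hR | hA
      · have hne : (G.redParents t).Nonempty := ⟨q, mem_red.mpr hR⟩
        have hsum := val_red htot hwd hne
        obtain ⟨p, hp, hppos⟩ : ∃ p ∈ G.redParents t, 0 < cval c p := by
          by_contra hcon
          push_neg at hcon
          have hzero : ∑ y ∈ G.redParents t, cval c y = 0 :=
            Finset.sum_eq_zero (fun q' hq' => by have := hcon q' hq'; omega)
          omega
        have hedge : G.Edge p t := Or.inl (mem_red.mp hp)
        have hanc : ancC G p < ancC G t := ancC_lt hwf.T5 hedge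
        obtain ⟨r, h1, h2, h3⟩ := ih p (by omega) hppos
        exact ⟨r, h1, h2, Relation.ReflTransGen.head ⟨hedge, hpos, hppos⟩ h3⟩
      · have hne : (G.aggChildren q).Nonempty := ⟨t, mem_agg.mpr hA⟩
        have hsum := val_agg htot hwd hne
        have hle : cval c t ≤ ∑ y ∈ G.aggChildren q, cval c y :=
          Finset.single_le_sum (fun i _ => Nat.zero_le _) (mem_agg.mpr hA)
        have hqpos : 0 < cval c q := by omega
        have hanc : ancC G q < ancC G t := ancC_lt hwf.T5 (Or.inr hA)
        obtain ⟨r, h1, h2, h3⟩ := ih q (by omega) hqpos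
        exact ⟨r, h1, h2, Relation.ReflTransGen.head ⟨Or.inr hA, hpos, hqpos⟩ h3⟩

lemma diverge {G : TFG V} {E : EqSys V} {P1 P2 : Set V}
    [DecidablePred (· ∈ P1)] [DecidablePred (· ∈ P2)]
    {N1 : PetriNet ↥P1} {m1 : ↥P1 → ℕ} {N2 : PetriNet ↥P2} {m2 : ↥P2 → ℕ}
    (hwf : WellFormed G E P1 P2) (heq : EEquiv E P1 P2 N1 m1 N2 m2) (hsafe1 : N1.Safe m1)
    {c : V → Option ℕ} (hconf : G.IsConfig c) (htot : TotalConf c) (hwd : G.WellDef c)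
    (hreach : N2.reach m2 (restrict c P2))
    {v w : V} (hv : v ∉ G.succs w) (hw : w ∉ G.succs v)
    (hvpos : 0 < cval c v) (hwpos : 0 < cval c w) :
    ∀ u, 0 < cval c u →
      Relation.ReflTransGen (ChainRel G c) v u →
      Relation.ReflTransGen (ChainRel G c) w u →
      ((∃ v0 w0 : V, NodeConc G P2 N2 m2 v0 v0 ∧ (v0, w0) ∈ G.R ∧
        ((v ∈ G.succs v0 \ G.succs w0 ∧ w ∈ G.succs w0) ∨
         (w ∈ G.succs v0 \ G.succs w0 ∧ v ∈ G.succs w0))) ∨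
      (∃ v0 w0 : V, v0 ≠ w0 ∧ G.IsRoot v0 ∧ G.IsRoot w0 ∧
        NodeConc G P2 N2 m2 v0 w0 ∧ v ∈ G.succs v0 ∧ w ∈ G.succs w0)) := by
  suffices H : ∀ n, ∀ u, descC G u < n → 0 < cval c u →
      Relation.ReflTransGen (ChainRel G c) v u →
      Relation.ReflTransGen (ChainRel G c) w u →
      ((∃ v0 w0 : V, NodeConc G P2 N2 m2 v0 v0 ∧ (v0, w0) ∈ G.R ∧
        ((v ∈ G.succs v0 \ G.succs w0 ∧ w ∈ G.succs w0) ∨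
         (w ∈ G.succs v0 \ G.succs w0 ∧ v ∈ G.succs w0))) ∨
      (∃ v0 w0 : V, v0 ≠ w0 ∧ G.IsRoot v0 ∧ G.IsRoot w0 ∧
        NodeConc G P2 N2 m2 v0 w0 ∧ v ∈ G.succs v0 ∧ w ∈ G.succs w0)) by
    exact fun u h1 h2 h3 => H (descC G u + 1) u (by omega) h1 h2 h3
  intro n
  induction n with
  | zero => intro u h; omega
  | succ n ih =>
    intro u hlt hupos hcv hcw
    rcases Relation.ReflTransGen.cases_tail hcv with rfl | ⟨a, hva, hau⟩
    · exact absurd (reach_of_chain hcw) hw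
    rcases Relation.ReflTransGen.cases_tail hcw with rfl | ⟨b, hwb, hbu⟩
    · exact absurd (reach_of_chain hcv) hv
    by_cases hab : a = b
    · subst hab
      have hdesc : descC G a < descC G u := descC_lt hwf.T5 hau.1
      exact ih a (by omega) hau.2.1 hva hwb
    · rcases hau.1 with hRua | hAua
      · by_cases hwa : G.Reach a w
        · have hka : G.kval a = none := kval_none_of_edge hwf hau.1
          have hchain := chain_of_reach hwf heq hsafe1 htot hwd hreach hau.2.1 hka w hwpos hwa
          have hdesc : descC G a < descC G u := descC_lt hwf.T5 hau.1
          exact ih a (by omega) hau.2.1 hva hchain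
        · exact Or.inl ⟨u, a, ⟨c, hconf, htot, hwd, hreach, hau.2.2, hau.2.2⟩, hRua,
            Or.inr ⟨⟨reach_of_chain hcw, hwa⟩, reach_of_chain hva⟩⟩
      · rcases hbu.1 with hRub | hAub
        · by_cases hvb : G.Reach b v
          · have hkb : G.kval b = none := kval_none_of_edge hwf hbu.1
            have hchain := chain_of_reach hwf heq hsafe1 htot hwd hreach hbu.2.1 hkb v hvpos hvb
            have hdesc : descC G b < descC G u := descC_lt hwf.T5 hbu.1
            exact ih b (by omega) hbu.2.1 hchain hwb
          · exact Or.inl ⟨u, b, ⟨c, hconf, htot, hwd, hreach, hbu.2.2, hbu.2.2⟩, hRub,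
              Or.inl ⟨⟨reach_of_chain hcv, hvb⟩, reach_of_chain hwb⟩⟩
        · exfalso
          have hamem : a ∈ G.aggChildren u := mem_agg.mpr hAua
          have hbmem : b ∈ G.aggChildren u := mem_agg.mpr hAub
          have hku : G.kval u = none := kval_none_of_agg_nonempty hwf ⟨a, hamem⟩
          have hb1 : cval c u ≤ 1 := val_le_one hwf heq hsafe1 htot hwd hreach hku
          have hsum := val_agg htot hwd (⟨a, hamem⟩ : (G.aggChildren u).Nonempty)
          have e1 : cval c a + ∑ y ∈ (G.aggChildren u).erase a, cval c y
              = ∑ y ∈ G.aggChildren u, cval c y := Finset.add_sum_erase _ (cval c) hamem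
          have e2 : cval c b ≤ ∑ y ∈ (G.aggChildren u).erase a, cval c y :=
            Finset.single_le_sum (fun i _ => Nat.zero_le _)
              (Finset.mem_erase.mpr ⟨Ne.symm hab, hbmem⟩)
          have ha' := hau.2.1
          have hb' := hbu.2.1
          omega

end AuxCPP

theorem concurrent_places_propagation {V : Type} [DecidableEq V] (G : TFG V) (E : EqSys V)
    (P1 P2 : Set V) [DecidablePred (· ∈ P1)] [DecidablePred (· ∈ P2)]
    (N1 : PetriNet ↥P1) (m1 : ↥P1 → ℕ) (N2 : PetriNet ↥P2) (m2 : ↥P2 → ℕ)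
    (hwf : WellFormed G E P1 P2) (heq : EEquiv E P1 P2 N1 m1 N2 m2)
    (hsafe1 : N1.Safe m1) (hsafe2 : N2.Safe m2)
    (v w : V) (hvw : NodeConc G P2 N2 m2 v w)
    (hv : v ∉ G.succs w) (hw : w ∉ G.succs v) :
    (∃ v0 w0 : V, NodeConc G P2 N2 m2 v0 v0 ∧ (v0, w0) ∈ G.R ∧
      ((v ∈ G.succs v0 \ G.succs w0 ∧ w ∈ G.succs w0) ∨
       (w ∈ G.succs v0 \ G.succs w0 ∧ v ∈ G.succs w0))) ∨
    (∃ v0 w0 : V, v0 ≠ w0 ∧ G.IsRoot v0 ∧ G.IsRoot w0 ∧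
      NodeConc G P2 N2 m2 v0 w0 ∧ v ∈ G.succs v0 ∧ w ∈ G.succs w0) := by
  obtain ⟨c, hconf, htot, hwd, hreach, hposv, hposw⟩ := hvw
  obtain ⟨r1, hp1, hr1, hc1⟩ := climb_root hwf htot hwd v hposv
  obtain ⟨r2, hp2, hr2, hc2⟩ := climb_root hwf htot hwd w hposw
  by_cases hr : r1 = r2
  · subst hr
    exact diverge hwf heq hsafe1 hconf htot hwd hreach hv hw hposv hposw r1 hp1 hc1 hc2
  · exact Or.inr ⟨r1, r2, hr, hr1, hr2, ⟨c, hconf, htot, hwd, hreach, hp1, hp2⟩,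
      reach_of_chain hc1, reach_of_chain hc2⟩
end

section
/- Let G(E) be a well-formed TFG with node concurrency relation C. If v ∘→ X or X →• v (i.e., the equation v = Σ_{w∈X} w is in E), then node v is dead (v C̄ v) if and only if every node w in X is dead (w C̄ w). -/
open Finset

variable {V : Type} [DecidableEq V]

lemma cval_eq_sum {V : Type} [DecidableEq V] (G : TFG V) (c : V → Option ℕ)
    (ht : TotalConf c) (hwd : G.WellDef c) (v : V) (X : Finset V)
    (hX : (X = G.aggChildren v ∨ X = G.redParents v) ∧ X.Nonempty) :
    cval c v = ∑ w ∈ X, cval c w := by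
  obtain ⟨n, hn⟩ : ∃ n, c v = some n := by
    cases h : c v with
    | none => exact absurd h (ht v)
    | some n => exact ⟨n, rfl⟩
  have := hwd.2 v n hn
  have hcv : cval c v = n := by simp [cval, hn]
  rcases hX.1 with h | h
  · rw [hcv, h]; exact this.1 (h ▸ hX.2)
  · rw [hcv, h]; exact this.2 (h ▸ hX.2)

theorem dead_node_equation {V : Type} [DecidableEq V] (G : TFG V) (E : EqSys V)
    (P1 P2 : Set V) [DecidablePred (· ∈ P1)] [DecidablePred (· ∈ P2)]
    (N1 : PetriNet ↥P1) (m1 : ↥P1 → ℕ) (N2 : PetriNet ↥P2) (m2 : ↥P2 → ℕ)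
    (hwf : WellFormed G E P1 P2) (heq : EEquiv E P1 P2 N1 m1 N2 m2)
    (v : V) (X : Finset V)
    (hX : (X = G.aggChildren v ∨ X = G.redParents v) ∧ X.Nonempty) :
    (¬ NodeConc G P2 N2 m2 v v) ↔ (∀ w ∈ X, ¬ NodeConc G P2 N2 m2 w w) := by
  constructor
  · rintro hv w hw ⟨c, h1, h2, h3, h4, h5, _⟩
    apply hv
    refine ⟨c, h1, h2, h3, h4, ?_, ?_⟩ <;>
    · rw [cval_eq_sum G c h2 h3 v X hX]
      exact Finset.sum_pos' (fun _ _ => Nat.zero_le _) ⟨w, hw, h5⟩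
  · rintro hall ⟨c, h1, h2, h3, h4, h5, _⟩
    rw [cval_eq_sum G c h2 h3 v X hX] at h5
    obtain ⟨w, hw, hpos⟩ : ∃ w ∈ X, 0 < cval c w := by
      by_contra h
      push_neg at h
      simp only [Nat.le_zero] at h
      rw [Finset.sum_eq_zero h] at h5
      exact lt_irrefl 0 h5
    exact hall w hw ⟨c, h1, h2, h3, h4, hpos, hpos⟩
end

section
/- Let G(E) be a well-formed TFG for an E-equivalence between safe marked Petri nets, with node concurrency relation C. If v ∘→ X or X →• v, then any two distinct nodes w, w' in X are nonconcurrent: w C̄ w'. -/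
open Finset

variable {V : Type} [DecidableEq V]

section AuxSiblings
open Classical

variable {V : Type} [DecidableEq V]

lemma mem_aggChildren {G : TFG V} {u w : V} :
    w ∈ G.aggChildren u ↔ (u, w) ∈ G.A := by
  simp only [TFG.aggChildren, Finset.mem_image, Finset.mem_filter]
  constructor
  · rintro ⟨⟨a, b⟩, ⟨hmem, h1⟩, h2⟩
    cases h1; cases h2; simpa using hmem
  · intro h; exact ⟨(u, w), ⟨h, rfl⟩, rfl⟩

lemma mem_redParents {G : TFG V} {u q : V} :
    q ∈ G.redParents u ↔ (q, u) ∈ G.R := by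
  simp only [TFG.redParents, Finset.mem_image, Finset.mem_filter]
  constructor
  · rintro ⟨⟨a, b⟩, ⟨hmem, h1⟩, h2⟩
    cases h1; cases h2; simpa using hmem
  · intro h; exact ⟨(q, u), ⟨h, rfl⟩, rfl⟩

lemma edge_mem_union {G : TFG V} {a b : V} (h : G.Edge a b) : (a, b) ∈ G.R ∪ G.A := by
  rcases h with h | h
  · exact Finset.mem_union_left _ h
  · exact Finset.mem_union_right _ h

/-- number of strict ancestors (among edge sources) of a node -/
noncomputable def meas (G : TFG V) (u : V) : ℕ :=
  (@Finset.filter V (fun x => Relation.TransGen G.Edge x u) (Classical.decPred _)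
    ((G.R ∪ G.A).image Prod.fst)).card

/-- number of strict descendants (among edge targets) of a node -/
noncomputable def meas2 (G : TFG V) (u : V) : ℕ :=
  (@Finset.filter V (fun x => Relation.TransGen G.Edge u x) (Classical.decPred _)
    ((G.R ∪ G.A).image Prod.snd)).card

lemma meas_lt (G : TFG V) (hT5 : ∀ x, ¬ Relation.TransGen G.Edge x x)
    {a b : V} (h : G.Edge a b) : meas G a < meas G b := by
  apply Finset.card_lt_card
  rw [Finset.ssubset_iff_of_subset]
  · refine ⟨a, ?_, ?_⟩
    · rw [Finset.mem_filter]
      exact ⟨Finset.mem_image.mpr ⟨(a, b), edge_mem_union h, rfl⟩, Relation.TransGen.single h⟩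
    · rw [Finset.mem_filter]
      rintro ⟨-, hcyc⟩
      exact hT5 a hcyc
  · intro x hx
    rw [Finset.mem_filter] at hx ⊢
    exact ⟨hx.1, hx.2.tail h⟩

lemma meas2_lt (G : TFG V) (hT5 : ∀ x, ¬ Relation.TransGen G.Edge x x)
    {a b : V} (h : G.Edge a b) : meas2 G b < meas2 G a := by
  apply Finset.card_lt_card
  rw [Finset.ssubset_iff_of_subset]
  · refine ⟨b, ?_, ?_⟩
    · rw [Finset.mem_filter]
      exact ⟨Finset.mem_image.mpr ⟨(a, b), edge_mem_union h, rfl⟩, Relation.TransGen.single h⟩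
    · rw [Finset.mem_filter]
      rintro ⟨-, hcyc⟩
      exact hT5 b hcyc
  · intro x hx
    rw [Finset.mem_filter] at hx ⊢
    exact ⟨hx.1, Relation.TransGen.head h hx.2⟩

/-- designated agglomeration child -/
noncomputable def desig (G : TFG V) (u : V) : V :=
  if h : (G.aggChildren u).Nonempty then h.choose else u

lemma desig_mem {G : TFG V} {u : V} (h : (G.aggChildren u).Nonempty) :
    desig G u ∈ G.aggChildren u := by
  rw [desig, dif_pos h]; exact h.choose_spec

/-- one step along the designated chain -/
def chainStep (G : TFG V) (a b : V) : Prop :=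
  (G.aggChildren a).Nonempty ∧ b = desig G a

lemma chainStep_edge {G : TFG V} {a b : V} (h : chainStep G a b) : G.Edge a b :=
  Or.inr (mem_aggChildren.mp (h.2 ▸ desig_mem h.1))

open Classical in
/-- The modified solution: it agrees with `s` outside of the strict descendants of `v`,
but routes the whole value of every changed node down its designated child. -/
noncomputable def modSol (G : TFG V) (hT5 : ∀ x, ¬ Relation.TransGen G.Edge x x)
    (s : V → ℕ) (v : V) (u : V) : ℕ :=
  if h : ∃ p, (p, u) ∈ G.A then
    if modSol G hT5 s v h.choose = s h.choose ∧
        ¬ Relation.ReflTransGen (chainStep G) v h.choose then s u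
    else if u = desig G h.choose then modSol G hT5 s v h.choose else 0
  else if hr : (G.redParents u).Nonempty then
    ∑ q ∈ (G.redParents u).attach, modSol G hT5 s v q.1
  else s u
termination_by meas G u
decreasing_by
  all_goals first
    | exact meas_lt G hT5 (Or.inr h.choose_spec)
    | exact meas_lt G hT5 (Or.inl (mem_redParents.mp q.2))

variable {G : TFG V} {E : EqSys V} {P1 P2 : Set V}

lemma agg_choose_eq (hwf : WellFormed G E P1 P2) {u : V} (h : ∃ p, (p, u) ∈ G.A)
    {p : V} (hp : (p, u) ∈ G.A) : h.choose = p :=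
  hwf.T3a p h.choose u hp (Or.inr h.choose_spec)

lemma modSol_eval_child (hwf : WellFormed G E P1 P2) (s : V → ℕ) (v : V)
    {u w : V} (hwA : (u, w) ∈ G.A) :
    modSol G hwf.T5 s v w =
      if modSol G hwf.T5 s v u = s u ∧ ¬ Relation.ReflTransGen (chainStep G) v u
      then s w else if w = desig G u then modSol G hwf.T5 s v u else 0 := by
  have hA : ∃ p, (p, w) ∈ G.A := ⟨u, hwA⟩
  have hch : hA.choose = u := agg_choose_eq hwf hA hwA
  conv_lhs => rw [modSol]
  rw [dif_pos hA, hch]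

lemma modSol_eval_red (hT5 : ∀ x, ¬ Relation.TransGen G.Edge x x) (s : V → ℕ) (v : V)
    {u : V} (hnA : ¬ ∃ p, (p, u) ∈ G.A) (hr : (G.redParents u).Nonempty) :
    modSol G hT5 s v u = ∑ q ∈ G.redParents u, modSol G hT5 s v q := by
  conv_lhs => rw [modSol]
  rw [dif_neg hnA, dif_pos hr, Finset.sum_attach]

lemma modSol_eval_other (hT5 : ∀ x, ¬ Relation.TransGen G.Edge x x) (s : V → ℕ) (v : V)
    {u : V} (hnA : ¬ ∃ p, (p, u) ∈ G.A) (hnr : ¬ (G.redParents u).Nonempty) :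
    modSol G hT5 s v u = s u := by
  conv_lhs => rw [modSol]
  rw [dif_neg hnA, dif_neg hnr]

lemma modSol_solves (hwf : WellFormed G E P1 P2) (s : V → ℕ) (hs : Solves E s) (v : V) :
    Solves E (modSol G hwf.T5 s v) := by
  intro e he
  obtain ⟨hd, hne⟩ := (hwf.T4 e.1 e.2).mpr (by simpa using he)
  rcases hd with hd | hd
  · -- e.2 = aggChildren e.1
    have hval : ∀ w ∈ e.2, modSol G hwf.T5 s v w =
        if modSol G hwf.T5 s v e.1 = s e.1 ∧
            ¬ Relation.ReflTransGen (chainStep G) v e.1 then s w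
        else if w = desig G e.1 then modSol G hwf.T5 s v e.1 else 0 := by
      intro w hw
      exact modSol_eval_child hwf s v (mem_aggChildren.mp (hd ▸ hw))
    by_cases hc : modSol G hwf.T5 s v e.1 = s e.1 ∧
        ¬ Relation.ReflTransGen (chainStep G) v e.1
    · rw [Finset.sum_congr rfl (fun w hw => (hval w hw).trans (if_pos hc))]
      rw [hc.1, hs e he]
    · rw [Finset.sum_congr rfl (fun w hw => (hval w hw).trans (if_neg hc))]
      rw [Finset.sum_ite_eq' e.2 (desig G e.1) (fun _ => modSol G hwf.T5 s v e.1)]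
      have hmem : desig G e.1 ∈ e.2 := hd ▸ desig_mem (by rw [← hd]; exact hne)
      rw [if_pos hmem]
  · -- e.2 = redParents e.1
    have hnA : ¬ ∃ p, (p, e.1) ∈ G.A := by
      rintro ⟨p, hp⟩
      obtain ⟨q, hq⟩ := hne
      have hqR : (q, e.1) ∈ G.R := mem_redParents.mp (hd ▸ hq)
      have hqp : q = p := hwf.T3a p q e.1 hp (Or.inl hqR)
      exact hwf.T3b p e.1 ⟨hqp ▸ hqR, hp⟩
    rw [modSol_eval_red hwf.T5 s v hnA (by rw [← hd] at *; exact hne), hd]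

lemma modSol_unchanged (hwf : WellFormed G E P1 P2) (s : V → ℕ) (hs : Solves E s) (v : V) :
    ∀ n u, meas G u < n → ¬ Relation.TransGen G.Edge v u →
      modSol G hwf.T5 s v u = s u := by
  intro n
  induction n with
  | zero => intro u h; exact absurd h (Nat.not_lt_zero _)
  | succ n ih =>
    intro u hlt hu
    by_cases hA : ∃ p, (p, u) ∈ G.A
    · obtain ⟨p, hp⟩ := hA
      have hpu : G.Edge p u := Or.inr hp
      have hnp : ¬ Relation.TransGen G.Edge v p := fun h => hu (h.tail hpu)
      have hMp : modSol G hwf.T5 s v p = s p :=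
        ih p (lt_of_lt_of_le (meas_lt G hwf.T5 hpu) (Nat.lt_succ_iff.mp hlt)) hnp
      have hni : ¬ Relation.ReflTransGen (chainStep G) v p := by
        intro hin
        rcases (Relation.reflTransGen_iff_eq_or_transGen.mp hin) with h | h
        · exact hu (Relation.TransGen.single (h ▸ hpu))
        · exact hu ((Relation.TransGen.mono (fun a b hab => chainStep_edge hab) _ _ h).tail hpu)
      rw [modSol_eval_child hwf s v hp, if_pos ⟨hMp, hni⟩]
    · by_cases hr : (G.redParents u).Nonempty
      · rw [modSol_eval_red hwf.T5 s v hA hr]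
        have hq : ∀ q ∈ G.redParents u, modSol G hwf.T5 s v q = s q := by
          intro q hq
          have hqu : G.Edge q u := Or.inl (mem_redParents.mp hq)
          exact ih q (lt_of_lt_of_le (meas_lt G hwf.T5 hqu) (Nat.lt_succ_iff.mp hlt))
            (fun h => hu (h.tail hqu))
        rw [Finset.sum_congr rfl hq]
        exact (hs (u, G.redParents u) ((hwf.T4 u _).mp ⟨Or.inr rfl, hr⟩)).symm
      · exact modSol_eval_other hwf.T5 s v hA hr

lemma modSol_chain (hwf : WellFormed G E P1 P2) (s : V → ℕ) (v : V) :
    ∀ u, Relation.ReflTransGen (chainStep G) v u →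
      modSol G hwf.T5 s v u = modSol G hwf.T5 s v v := by
  intro u h
  induction h with
  | refl => rfl
  | @tail b c hab hbc ih =>
    obtain ⟨hbne, hc⟩ := hbc
    have hbcA : (b, c) ∈ G.A := mem_aggChildren.mp (hc ▸ desig_mem hbne)
    rw [modSol_eval_child hwf s v hbcA, if_neg (fun h' => h'.2 hab), if_pos hc, ih]

lemma chain_leaf (G : TFG V) (hT5 : ∀ x, ¬ Relation.TransGen G.Edge x x) (v : V) :
    ∀ n u, meas2 G u < n → Relation.ReflTransGen (chainStep G) v u →
      ∃ p, Relation.ReflTransGen (chainStep G) v p ∧ G.aggChildren p = ∅ := by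
  intro n
  induction n with
  | zero => intro u h; exact absurd h (Nat.not_lt_zero _)
  | succ n ih =>
    intro u hlt hu
    by_cases hne : (G.aggChildren u).Nonempty
    · have hstep : chainStep G u (desig G u) := ⟨hne, rfl⟩
      exact ih (desig G u)
        (lt_of_lt_of_le (meas2_lt G hT5 (chainStep_edge hstep)) (Nat.lt_succ_iff.mp hlt))
        (hu.tail hstep)
    · exact ⟨u, hu, Finset.not_nonempty_iff_eq_empty.mp hne⟩

lemma circLeaf_of_empty {G : TFG V} {u : V} (h : G.aggChildren u = ∅) : G.IsCircLeaf u := by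
  intro w hw
  have : w ∈ G.aggChildren u := mem_aggChildren.mpr hw
  rw [h] at this
  exact absurd this (Finset.notMem_empty w)

lemma isRoot_no_trans {G : TFG V} {r : V} (h : G.IsRoot r) (v : V) :
    ¬ Relation.TransGen G.Edge v r := by
  intro ht
  obtain ⟨b, -, hbr⟩ := (Relation.TransGen.tail'_iff).mp ht
  exact h b hbr

end AuxSiblings
theorem siblings_nonconcurrent {V : Type} [DecidableEq V] (G : TFG V) (E : EqSys V)
    (P1 P2 : Set V) [DecidablePred (· ∈ P1)] [DecidablePred (· ∈ P2)]
    (N1 : PetriNet ↥P1) (m1 : ↥P1 → ℕ) (N2 : PetriNet ↥P2) (m2 : ↥P2 → ℕ)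
    (hwf : WellFormed G E P1 P2) (heq : EEquiv E P1 P2 N1 m1 N2 m2)
    (hsafe1 : N1.Safe m1) (hsafe2 : N2.Safe m2)
    (v : V) (X : Finset V)
    (hX : (X = G.aggChildren v ∨ X = G.redParents v) ∧ X.Nonempty) :
    ∀ w ∈ X, ∀ w' ∈ X, w ≠ w' → ¬ NodeConc G P2 N2 m2 w w' := by
  rintro w hw w' hw' hne ⟨c, hcfg, htot, hwd, hreach2, hpw, hpw'⟩
  set s : V → ℕ := cval c with hsdef
  -- s solves E
  have hsol : Solves E s := by
    intro e he
    obtain ⟨hd, hXne⟩ := (hwf.T4 e.1 e.2).mpr (by simpa using he)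
    obtain ⟨n, hn⟩ := Option.ne_none_iff_exists'.mp (htot e.1)
    have hval : s e.1 = n := by simp [hsdef, cval, hn]
    rcases hd with hd | hd
    · have := (hwd.2 e.1 n hn).1 (by rw [← hd]; exact hXne)
      rw [hval, this, hd]
    · have := (hwd.2 e.1 n hn).2 (by rw [← hd]; exact hXne)
      rw [hval, this, hd]
  have hvE : (v, X) ∈ E := (hwf.T4 v X).mp hX
  -- s v ≥ 2
  have hv2 : 2 ≤ s v := by
    have heqv : s v = ∑ x ∈ X, s x := hsol (v, X) hvE
    have hsub : ({w, w'} : Finset V) ⊆ X := by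
      intro x hx
      rcases Finset.mem_insert.mp hx with h | h
      · exact h ▸ hw
      · exact (Finset.mem_singleton.mp h) ▸ hw'
    have hle : s w + s w' ≤ ∑ x ∈ X, s x := by
      calc s w + s w' = ∑ x ∈ ({w, w'} : Finset V), s x := (Finset.sum_pair hne).symm
        _ ≤ ∑ x ∈ X, s x := Finset.sum_le_sum_of_subset hsub
    have h1 : 1 ≤ s w := hpw
    have h2 : 1 ≤ s w' := hpw'
    omega
  -- v is not a constant node
  have hvnone : G.kval v = none := by
    have hfv : v ∈ fvars E := ⟨(v, X), hvE, Or.inl rfl⟩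
    have hmem : v ∈ P1 ∪ P2 ∪ fvars E := Set.mem_union_right _ hfv
    have h2 := Set.ext_iff.mp hwf.T1 v
    exact h2.mpr hmem
  -- restriction to P1 is reachable, so s ≤ 1 on P1
  have hag2 : AgreesOn s P2 (restrict c P2) := fun p => rfl
  have hreach1 : N1.reach m1 (restrict c P1) :=
    (heq.A3 (restrict c P1) (restrict c P2) ⟨s, hsol, fun p => rfl, hag2⟩).mpr hreach2
  have hP1bound : ∀ p, p ∈ P1 → s p ≤ 1 := fun p hp => hsafe1 _ hreach1 ⟨p, hp⟩
  have hvP1 : v ∉ P1 := fun h => by have := hP1bound v h; omega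
  -- the modified solution
  set M : V → ℕ := modSol G hwf.T5 s v with hMdef
  have hMs : Solves E M := modSol_solves hwf s hsol v
  have hMv : M v = s v :=
    modSol_unchanged hwf s hsol v (meas G v + 1) v (Nat.lt_succ_self _) (hwf.T5 v)
  -- find the leaf at the end of the chain
  obtain ⟨p, hpchain, hpempty⟩ :=
    chain_leaf G hwf.T5 v (meas2 G v + 1) v (Nat.lt_succ_self _) Relation.ReflTransGen.refl
  have hMp : M p = s v := (modSol_chain hwf s v p hpchain).trans hMv
  have hpleaf : G.IsCircLeaf p := circLeaf_of_empty hpempty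
  have hpP1 : p ∈ P1 := by
    rcases (Relation.reflTransGen_iff_eq_or_transGen.mp hpchain) with h | h
    · exact absurd ((hwf.T6leaf v hvnone).mp (h ▸ hpleaf)) hvP1
    · obtain ⟨b, -, hbp⟩ := (Relation.TransGen.tail'_iff).mp h
      have hbpE : G.Edge b p := chainStep_edge hbp
      have hpnone : G.kval p = none := by
        by_contra hk
        exact (hwf.T2 p hk) b hbpE
      exact (hwf.T6leaf p hpnone).mp hpleaf
  -- roots (in particular P2) are unchanged
  have hagM2 : AgreesOn M P2 (restrict c P2) := by
    intro r
    have hrnone : G.kval (r : V) = none := by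
      have hmem : (r : V) ∈ P1 ∪ P2 ∪ fvars E :=
        Set.mem_union_left _ (Set.mem_union_right _ r.2)
      exact (Set.ext_iff.mp hwf.T1 r).mpr hmem
    have hroot : G.IsRoot (r : V) := (hwf.T6root r hrnone).mpr r.2
    exact modSol_unchanged hwf s hsol v (meas G r + 1) r (Nat.lt_succ_self _)
      (isRoot_no_trans hroot v)
  -- the modified P1 marking is reachable in N1, contradiction with safety
  have hreachM : N1.reach m1 (fun q : ↥P1 => M ↑q) :=
    (heq.A3 (fun q : ↥P1 => M ↑q) (restrict c P2)
      ⟨M, hMs, fun q => rfl, hagM2⟩).mpr hreach2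
  have hfin := hsafe1 _ hreachM ⟨p, hpP1⟩
  simp only at hfin
  rw [hMp] at hfin
  omega
end

section
/- Let G(E) be a well-formed TFG with node concurrency relation C. Suppose v ∘→ X or X →• v. Then for any node v': (i) if v C̄ v' then w C̄ v' for every w in X; and (ii) if w C̄ v' for every w in X, then v C̄ v'. -/
open Finset

variable {V : Type} [DecidableEq V]

theorem heredity_nonconcurrency {V : Type} [DecidableEq V] (G : TFG V) (E : EqSys V)
    (P1 P2 : Set V) [DecidablePred (· ∈ P1)] [DecidablePred (· ∈ P2)]
    (N1 : PetriNet ↥P1) (m1 : ↥P1 → ℕ) (N2 : PetriNet ↥P2) (m2 : ↥P2 → ℕ)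
    (hwf : WellFormed G E P1 P2) (heq : EEquiv E P1 P2 N1 m1 N2 m2)
    (v : V) (X : Finset V)
    (hX : (X = G.aggChildren v ∨ X = G.redParents v) ∧ X.Nonempty) (v' : V) :
    (¬ NodeConc G P2 N2 m2 v v' → ∀ w ∈ X, ¬ NodeConc G P2 N2 m2 w v') ∧
    ((∀ w ∈ X, ¬ NodeConc G P2 N2 m2 w v') → ¬ NodeConc G P2 N2 m2 v v') := by
  have key : ∀ c, TotalConf c → G.WellDef c → cval c v = ∑ w ∈ X, cval c w := by
    intro c htot hwd
    obtain ⟨n, hn⟩ := Option.ne_none_iff_exists'.mp (htot v)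
    have hcv : cval c v = n := by simp [cval, hn]
    rcases hX.1 with h | h
    · rw [hcv, (hwd.2 v n hn).1 (h ▸ hX.2), h]
    · rw [hcv, (hwd.2 v n hn).2 (h ▸ hX.2), h]
  constructor
  · rintro hnv w hw ⟨c, h1, h2, h3, h4, h5, h6⟩
    exact hnv ⟨c, h1, h2, h3, h4, by
      rw [key c h2 h3]
      exact lt_of_lt_of_le h5 (Finset.single_le_sum (fun _ _ => Nat.zero_le _) hw), h6⟩
  · rintro hall ⟨c, h1, h2, h3, h4, h5, h6⟩
    rw [key c h2 h3] at h5
    obtain ⟨w, hw, hwpos⟩ : ∃ w ∈ X, 0 < cval c w := by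
      by_contra h
      push_neg at h
      simp only [Nat.le_zero] at h
      rw [Finset.sum_eq_zero h] at h5
      exact lt_irrefl 0 h5
    exact hall w hw ⟨c, h1, h2, h3, h4, hwpos, h6⟩
end

section
/- Let G(E) be a well-formed TFG for (N1,m1) ▷_E (N2,m2) and C the node concurrency relation of G(E). Then for all places p, q of N1: p and q are concurrent in (N1,m1) (some reachable marking of (N1,m1) marks both positively) if and only if p C q. Similarly, for all places p, q of N2: p and q are concurrent in (N2,m2) if and only if p C q. -/
open Finset

variable {V : Type} [DecidableEq V]

theorem nodeConc_generalizes_concurrency {V : Type} [DecidableEq V] (G : TFG V) (E : EqSys V)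
    (P1 P2 : Set V) [DecidablePred (· ∈ P1)] [DecidablePred (· ∈ P2)]
    (N1 : PetriNet ↥P1) (m1 : ↥P1 → ℕ) (N2 : PetriNet ↥P2) (m2 : ↥P2 → ℕ)
    (hwf : WellFormed G E P1 P2) (heq : EEquiv E P1 P2 N1 m1 N2 m2) :
    (∀ p q : ↥P1, N1.ConcPlaces m1 p q ↔ NodeConc G P2 N2 m2 ↑p ↑q) ∧
    (∀ p q : ↥P2, N2.ConcPlaces m2 p q ↔ NodeConc G P2 N2 m2 ↑p ↑q) := by
  classical
  have hT1 : ∀ v : V, G.kval v = none ↔ v ∈ P1 ∪ P2 ∪ fvars E := fun v =>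
    Set.ext_iff.mp hwf.T1 v
  have hkP1 : ∀ p : ↥P1, G.kval ↑p = none := fun p =>
    (hT1 ↑p).mpr (Or.inl (Or.inl p.2))
  have hkP2 : ∀ p : ↥P2, G.kval ↑p = none := fun p =>
    (hT1 ↑p).mpr (Or.inl (Or.inr p.2))
  -- build a total well-defined configuration from any solution of E
  have build : ∀ s : V → ℕ, Solves E s →
      ∃ c : V → Option ℕ, G.IsConfig c ∧ TotalConf c ∧ G.WellDef c ∧
        (∀ v, G.kval v = none → cval c v = s v) := by
    intro s hs
    set s' : V → ℕ := fun v => (G.kval v).getD (s v) with hs'def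
    refine ⟨fun v => some (s' v), ?_, ?_, ⟨?_, ?_⟩, ?_⟩
    · intro v n hn; simp [s', hn]
    · intro v; simp
    · intro v w _; simp
    · intro v n hn
      have hn' : n = s' v := by simpa using hn.symm
      have key : ∀ X : Finset V, (v, X) ∈ E →
          s' v = ∑ w ∈ X, cval (fun u => some (s' u)) w := by
        intro X hX
        have hv : G.kval v = none := (hT1 v).mpr (Or.inr ⟨(v, X), hX, Or.inl rfl⟩)
        have h1 : s' v = s v := by simp [s', hv]
        rw [h1, hs _ hX]
        refine Finset.sum_congr rfl fun w hw => ?_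
        have hwk : G.kval w = none := (hT1 w).mpr (Or.inr ⟨(v, X), hX, Or.inr hw⟩)
        simp [cval, s', hwk]
      constructor
      · intro hne
        rw [hn']
        exact key _ ((hwf.T4 v (G.aggChildren v)).mp ⟨Or.inl rfl, hne⟩)
      · intro hne
        rw [hn']
        exact key _ ((hwf.T4 v (G.redParents v)).mp ⟨Or.inr rfl, hne⟩)
    · intro v hv; simp [cval, s', hv]
  -- cval of a total well-defined configuration solves E
  have solves_of_wd : ∀ c : V → Option ℕ, TotalConf c → G.WellDef c →
      Solves E (cval c) := by
    intro c htot hwd e he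
    obtain ⟨hX, hne⟩ := (hwf.T4 e.1 e.2).mpr he
    obtain ⟨n, hn⟩ : ∃ n, c e.1 = some n := Option.ne_none_iff_exists'.mp (htot e.1)
    have hcv : cval c e.1 = n := by simp [cval, hn]
    have hthis := hwd.2 e.1 n hn
    rcases hX with h | h
    · rw [hcv, h]; exact hthis.1 (h ▸ hne)
    · rw [hcv, h]; exact hthis.2 (h ▸ hne)
  constructor
  · intro p q
    constructor
    · rintro ⟨m, hm, hp, hq⟩
      obtain ⟨s, hsol, hag⟩ := heq.A1l m hm
      obtain ⟨c, hcfg, htot, hwd, hval⟩ := build s hsol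
      have hcP1 : ∀ r : ↥P1, cval c ↑r = s ↑r := fun r => hval _ (hkP1 r)
      have hcP2 : ∀ r : ↥P2, cval c ↑r = s ↑r := fun r => hval _ (hkP2 r)
      have hag2 : AgreesOn s P2 (restrict c P2) := fun r => (hcP2 r).symm
      have hreach2 : N2.reach m2 (restrict c P2) :=
        (heq.A3 m (restrict c P2) ⟨s, hsol, hag, hag2⟩).mp hm
      exact ⟨c, hcfg, htot, hwd, hreach2,
        by rw [hcP1 p, hag p]; exact hp,
        by rw [hcP1 q, hag q]; exact hq⟩
    · rintro ⟨c, hcfg, htot, hwd, hreach, hp, hq⟩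
      have hsol := solves_of_wd c htot hwd
      have hreach1 : N1.reach m1 (restrict c P1) :=
        (heq.A3 (restrict c P1) (restrict c P2)
          ⟨cval c, hsol, fun r => rfl, fun r => rfl⟩).mpr hreach
      exact ⟨restrict c P1, hreach1, hp, hq⟩
  · intro p q
    constructor
    · rintro ⟨m, hm, hp, hq⟩
      obtain ⟨s, hsol, hag⟩ := heq.A1r m hm
      obtain ⟨c, hcfg, htot, hwd, hval⟩ := build s hsol
      have hcP2 : ∀ r : ↥P2, cval c ↑r = s ↑r := fun r => hval _ (hkP2 r)
      have hrestr : restrict c P2 = m := funext fun r => (hcP2 r).trans (hag r)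
      exact ⟨c, hcfg, htot, hwd, hrestr ▸ hm,
        by rw [hcP2 p, hag p]; exact hp,
        by rw [hcP2 q, hag q]; exact hq⟩
    · rintro ⟨c, hcfg, htot, hwd, hreach, hp, hq⟩
      exact ⟨restrict c P2, hreach, hp, hq⟩
end
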